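/- arXiv:1309.2201 — 2 statements merged into one kernel-verified Lean document; each statement's English description precedes it below -/
import Mathlib

section
/- Let K_{n+1} be the complete graph on vertices {0,...,n} rooted at 0. For each a ≥ 0, the number of spanning trees of K_{n+1} with exactly a inversions equals the number of parking functions for K_{n+1} of degree binom(n,2) - a. -/
open Finset

namespace PFG

variable {n : ℕ}

/-- `deg_{Sᶜ}(i)`: the number of edges `{i,j}` of `G` with `j ∉ S`. -/
noncomputable def sDeg (G : SimpleGraph (Fin (n+1))) (S : Finset (Fin (n+1))) (i : Fin (n+1)) : ℕ :=
  Set.ncard {j : Fin (n+1) | G.Adj i j ∧ j ∉ S}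

/-- `P` is a parking function for `G` with respect to the root `r`:
for every nonempty `S ⊆ V \ {r}` there is `i ∈ S` with `P i < deg_{Sᶜ}(i)`. -/
def IsParkingFunction (G : SimpleGraph (Fin (n+1))) (r : Fin (n+1))
    (P : Fin (n+1) → ℕ) : Prop :=
  ∀ S : Finset (Fin (n+1)), S.Nonempty → r ∉ S → ∃ i ∈ S, P i < sDeg G S i

/-- The degree of a parking function: the sum of its values over non-root vertices. -/
def degPF (r : Fin (n+1)) (P : Fin (n+1) → ℕ) : ℕ := ∑ v ∈ univ.erase r, P v

/-- A spanning tree of `G` rooted at `r`, encoded by its parent function: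
each non-root vertex is adjacent (in `G`) to its parent, and iterating
the parent map from any vertex reaches the root. -/
structure RootedSpanningTree (G : SimpleGraph (Fin (n+1))) (r : Fin (n+1)) where
  parent : Fin (n+1) → Fin (n+1)
  parent_root : parent r = r
  adj_parent : ∀ v, v ≠ r → G.Adj (parent v) v
  reaches_root : ∀ v, ∃ k, parent^[k] v = r

/-- `i` is a (proper) ancestor of `j` in the rooted tree with parent map `par`. -/
def IsAncestor (par : Fin (n+1) → Fin (n+1)) (i j : Fin (n+1)) : Prop :=
  ∃ k, 0 < k ∧ par^[k] j = i

/-- An inversion: `i` is an ancestor of `j` and `i > j`. -/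
def IsInversion (par : Fin (n+1) → Fin (n+1)) (i j : Fin (n+1)) : Prop :=
  IsAncestor par i j ∧ j < i

/-- A κ-inversion: an inversion `(i,j)` such that moreover `i` is not the
root and the parent of `i` is adjacent to `j` in `G`. -/
def IsKappaInversion (G : SimpleGraph (Fin (n+1))) (r : Fin (n+1))
    (par : Fin (n+1) → Fin (n+1)) (i j : Fin (n+1)) : Prop :=
  IsAncestor par i j ∧ j < i ∧ i ≠ r ∧ G.Adj (par i) j

/-- the κ-number: the number of κ-inversions. -/
noncomputable def kappaNum (G : SimpleGraph (Fin (n+1))) (r : Fin (n+1))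
    (par : Fin (n+1) → Fin (n+1)) : ℕ :=
  Set.ncard {p : Fin (n+1) × Fin (n+1) | IsKappaInversion G r par p.1 p.2}

/-- the number of inversions. -/
noncomputable def invNum (par : Fin (n+1) → Fin (n+1)) : ℕ :=
  Set.ncard {p : Fin (n+1) × Fin (n+1) | IsInversion par p.1 p.2}

open Classical in
/-- The neighbors of `i` in `G`, listed in decreasing order. -/
noncomputable def nbrs (G : SimpleGraph (Fin (n+1))) (i : Fin (n+1)) : List (Fin (n+1)) :=
  ((univ.filter (fun j => G.Adj i j)).sort (· ≤ ·)).reverse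

/-- One step of depth-first search from vertex `i`: scan the neighbors of `i`
in decreasing order; each unvisited neighbor `j` is visited, gets parent `i`,
and the search recurses from `j`.  The state is the pair
(visited vertices, parent map). -/
noncomputable def dfsStep (G : SimpleGraph (Fin (n+1))) :
    ℕ → Fin (n+1) → Finset (Fin (n+1)) × (Fin (n+1) → Fin (n+1)) →
      Finset (Fin (n+1)) × (Fin (n+1) → Fin (n+1))
  | 0, _, st => st
  | (fuel+1), i, st =>
      (nbrs G i).foldl
        (fun st j =>
          if j ∈ st.1 then st
          else dfsStep G fuel j (insert j st.1, Function.update st.2 j i)) st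

/-- The parent map of the depth-first search tree of `G` rooted at `r`,
visiting neighbors in decreasing numerical order. -/
noncomputable def dfsParent (G : SimpleGraph (Fin (n+1))) (r : Fin (n+1)) :
    Fin (n+1) → Fin (n+1) :=
  (dfsStep G (n+1) r ({r}, fun _ => r)).2

/-- The set of edges of the rooted tree given by parent map `par`. -/
def treeEdges (r : Fin (n+1)) (par : Fin (n+1) → Fin (n+1)) : Set (Sym2 (Fin (n+1))) :=
  {e | ∃ v, v ≠ r ∧ e = s(par v, v)}

end PFG

namespace KW
open Finset

variable {n : ℕ}

/-! ### Section 1: ancestor machinery for a parent map -/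

def reach (p : Fin (n+1) → Fin (n+1)) (v : Fin (n+1)) : Prop := ∃ k, p^[k] v = 0

lemma iterate_zero (p : Fin (n+1) → Fin (n+1)) (h0 : p 0 = 0) (k : ℕ) :
    p^[k] (0 : Fin (n+1)) = 0 := by
  induction k with
  | zero => rfl
  | succ k ih => rw [Function.iterate_succ_apply', ih, h0]

lemma iterate_stable (p : Fin (n+1) → Fin (n+1)) (h0 : p 0 = 0) {v : Fin (n+1)} {m : ℕ}
    (hm : p^[m] v = 0) {k : ℕ} (hk : m ≤ k) : p^[k] v = 0 := by
  obtain ⟨j, rfl⟩ := Nat.exists_eq_add_of_le hk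
  have h1 : p^[j + m] v = p^[j] (p^[m] v) := Function.iterate_add_apply p j m v
  rw [Nat.add_comm m j, h1, hm, iterate_zero p h0]

lemma eq_zero_of_cycle (p : Fin (n+1) → Fin (n+1)) (h0 : p 0 = 0) {v : Fin (n+1)}
    (hr : reach p v) {k : ℕ} (hk : 0 < k) (hc : p^[k] v = v) : v = 0 := by
  obtain ⟨m, hm⟩ := hr
  have hmul : ∀ j : ℕ, p^[j * k] v = v := by
    intro j
    induction j with
    | zero => simp
    | succ j ih =>
        rw [Nat.succ_mul, Function.iterate_add_apply, hc, ih]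
  have h1 : p^[m * k] v = v := hmul m
  have h2 : p^[m * k] v = 0 := iterate_stable p h0 hm (Nat.le_mul_of_pos_right m hk)
  rw [h1] at h2; exact h2

open Classical in
/-- the set of (weak) ancestors of `v` -/
noncomputable def ancF (p : Fin (n+1) → Fin (n+1)) (v : Fin (n+1)) : Finset (Fin (n+1)) :=
  univ.filter (fun x => ∃ k, p^[k] v = x)

lemma mem_ancF {p : Fin (n+1) → Fin (n+1)} {v x : Fin (n+1)} :
    x ∈ ancF p v ↔ ∃ k, p^[k] v = x := by
  simp [ancF]

lemma mem_ancF_iff_ancestor {p : Fin (n+1) → Fin (n+1)} {v x : Fin (n+1)} :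
    x ∈ ancF p v ↔ (x = v ∨ PFG.IsAncestor p x v) := by
  rw [mem_ancF]
  constructor
  · rintro ⟨k, hk⟩
    rcases Nat.eq_zero_or_pos k with rfl | hpos
    · exact Or.inl hk.symm
    · exact Or.inr ⟨k, hpos, hk⟩
  · rintro (rfl | ⟨k, _, hk⟩)
    · exact ⟨0, rfl⟩
    · exact ⟨k, hk⟩

lemma self_mem_ancF {p : Fin (n+1) → Fin (n+1)} {v : Fin (n+1)} : v ∈ ancF p v :=
  mem_ancF.2 ⟨0, rfl⟩

lemma parent_mem_ancF {p : Fin (n+1) → Fin (n+1)} {v : Fin (n+1)} : p v ∈ ancF p v :=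
  mem_ancF.2 ⟨1, rfl⟩

lemma ancF_zero {p : Fin (n+1) → Fin (n+1)} (h0 : p 0 = 0) : ancF p 0 = {0} := by
  ext x
  simp only [mem_ancF, Finset.mem_singleton]
  constructor
  · rintro ⟨k, hk⟩; rw [iterate_zero p h0] at hk; exact hk.symm
  · rintro rfl; exact ⟨0, rfl⟩

lemma ancF_succ {p : Fin (n+1) → Fin (n+1)} {v : Fin (n+1)} :
    ancF p v = insert v (ancF p (p v)) := by
  ext x
  simp only [mem_ancF, Finset.mem_insert]
  constructor
  · rintro ⟨k, hk⟩
    cases k with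
    | zero => exact Or.inl hk.symm
    | succ k => exact Or.inr ⟨k, by rw [← hk, Function.iterate_succ_apply]⟩
  · rintro (rfl | ⟨k, hk⟩)
    · exact ⟨0, rfl⟩
    · exact ⟨k+1, by rw [Function.iterate_succ_apply]; exact hk⟩

lemma not_mem_ancF_parent {p : Fin (n+1) → Fin (n+1)} (h0 : p 0 = 0) {v : Fin (n+1)}
    (hr : reach p v) (hv : v ≠ 0) : v ∉ ancF p (p v) := by
  intro hmem
  obtain ⟨k, hk⟩ := mem_ancF.1 hmem
  exact hv (eq_zero_of_cycle p h0 hr (k := k+1) (Nat.succ_pos k)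
    (by rw [Function.iterate_succ_apply]; exact hk))

lemma ancF_mono {p : Fin (n+1) → Fin (n+1)} {u v : Fin (n+1)} (h : u ∈ ancF p v) :
    ancF p u ⊆ ancF p v := by
  obtain ⟨k, hk⟩ := mem_ancF.1 h
  intro x hx
  obtain ⟨m, hm⟩ := mem_ancF.1 hx
  exact mem_ancF.2 ⟨m + k, by rw [Function.iterate_add_apply, hk, hm]⟩

lemma ancF_total {p : Fin (n+1) → Fin (n+1)} {v x y : Fin (n+1)}
    (hx : x ∈ ancF p v) (hy : y ∈ ancF p v) : x ∈ ancF p y ∨ y ∈ ancF p x := by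
  obtain ⟨a, ha⟩ := mem_ancF.1 hx
  obtain ⟨b, hb⟩ := mem_ancF.1 hy
  rcases Nat.le_total a b with h | h
  · right
    obtain ⟨c, rfl⟩ := Nat.exists_eq_add_of_le h
    refine mem_ancF.2 ⟨c, ?_⟩
    rw [Nat.add_comm a c] at hb
    rw [← ha, ← Function.iterate_add_apply]; exact hb
  · left
    obtain ⟨c, rfl⟩ := Nat.exists_eq_add_of_le h
    refine mem_ancF.2 ⟨c, ?_⟩
    rw [Nat.add_comm b c] at ha
    rw [← hb, ← Function.iterate_add_apply]; exact ha

lemma reach_of_mem_ancF {p : Fin (n+1) → Fin (n+1)} (h0 : p 0 = 0) {v x : Fin (n+1)}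
    (hr : reach p v) (hx : x ∈ ancF p v) : reach p x := by
  obtain ⟨k, hk⟩ := mem_ancF.1 hx
  obtain ⟨m, hm⟩ := hr
  refine ⟨m, ?_⟩
  rw [← hk, ← Function.iterate_add_apply]
  exact iterate_stable p h0 hm (Nat.le_add_right m k)

lemma ancF_antisymm {p : Fin (n+1) → Fin (n+1)} (h0 : p 0 = 0) {x y : Fin (n+1)}
    (hr : reach p y) (hxy : x ∈ ancF p y) (hyx : y ∈ ancF p x) : x = y := by
  obtain ⟨a, ha⟩ := mem_ancF.1 hxy
  obtain ⟨b, hb⟩ := mem_ancF.1 hyx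
  rcases Nat.eq_zero_or_pos (b + a) with hab | hpos
  · have ha0 : a = 0 := by omega
    subst ha0; simpa using ha.symm
  · have hcyc : p^[b + a] y = y := by
      rw [Function.iterate_add_apply, ha, hb]
    have hy0 : y = 0 := eq_zero_of_cycle p h0 hr hpos hcyc
    subst hy0
    rw [ancF_zero h0] at hxy
    simpa using hxy

lemma zero_mem_ancF {p : Fin (n+1) → Fin (n+1)} {v : Fin (n+1)} (hr : reach p v) :
    (0 : Fin (n+1)) ∈ ancF p v := by
  obtain ⟨m, hm⟩ := hr; exact mem_ancF.2 ⟨m, hm⟩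

/-- "depth" measured as the size of the ancestor chain. -/
noncomputable def dep (p : Fin (n+1) → Fin (n+1)) (v : Fin (n+1)) : ℕ := (ancF p v).card

lemma dep_lt {p : Fin (n+1) → Fin (n+1)} (h0 : p 0 = 0) {u x : Fin (n+1)}
    (hr : reach p x) (hu : u ∈ ancF p x) (hne : u ≠ x) : dep p u < dep p x := by
  apply Finset.card_lt_card
  refine ⟨ancF_mono hu, fun hsub => ?_⟩
  exact hne (ancF_antisymm h0 hr hu (hsub self_mem_ancF))

/-- number of ancestors of `u` (inclusive) whose label exceeds `w` -/
noncomputable def aval (p : Fin (n+1) → Fin (n+1)) (u w : Fin (n+1)) : ℕ :=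
  ((ancF p u).filter (fun x => w < x)).card

lemma aval_mono {p : Fin (n+1) → Fin (n+1)} {u v w : Fin (n+1)} (h : u ∈ ancF p v) :
    aval p u w ≤ aval p v w :=
  Finset.card_le_card (Finset.filter_subset_filter _ (ancF_mono h))

lemma aval_zero {p : Fin (n+1) → Fin (n+1)} (h0 : p 0 = 0) (w : Fin (n+1)) :
    aval p 0 w = 0 := by
  rw [aval, ancF_zero h0, Finset.filter_singleton,
    if_neg (by simp [Fin.lt_def])]
  rfl

lemma eq_zero_of_self_parent {p : Fin (n+1) → Fin (n+1)} (h0 : p 0 = 0) {u : Fin (n+1)}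
    (hr : reach p u) (h : p u = u) : u = 0 :=
  eq_zero_of_cycle p h0 hr (k := 1) Nat.one_pos (by simpa using h)

lemma aval_succ {p : Fin (n+1) → Fin (n+1)} (h0 : p 0 = 0) {u : Fin (n+1)}
    (hr : reach p u) (hu : u ≠ 0) (w : Fin (n+1)) :
    aval p u w = aval p (p u) w + (if w < u then 1 else 0) := by
  rw [aval, aval, ancF_succ (v := u), Finset.filter_insert]
  split
  · rw [Finset.card_insert_of_notMem, Nat.add_comm]
    intro hmem
    exact not_mem_ancF_parent h0 hr hu (Finset.mem_of_mem_filter _ hmem)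
  · rfl

/-- intermediate value: every value `k ≤ aval p u w` is attained on the chain of `u`. -/
lemma aval_ivt {p : Fin (n+1) → Fin (n+1)} (h0 : p 0 = 0) {w : Fin (n+1)} :
    ∀ u : Fin (n+1), reach p u → ∀ k, k ≤ aval p u w → ∃ x ∈ ancF p u, aval p x w = k := by
  suffices H : ∀ d, ∀ u : Fin (n+1), dep p u ≤ d → reach p u → ∀ k, k ≤ aval p u w →
      ∃ x ∈ ancF p u, aval p x w = k by
    intro u hr k hk; exact H (dep p u) u le_rfl hr k hk
  intro d
  induction d with
  | zero =>
      intro u hd _ _ _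
      have : 0 < dep p u := Finset.card_pos.2 ⟨u, self_mem_ancF⟩
      omega
  | succ d ih =>
      intro u hd hr k hk
      rcases eq_or_lt_of_le hk with heq | hlt
      · exact ⟨u, self_mem_ancF, heq.symm⟩
      · have hu0 : u ≠ 0 := by
          rintro rfl
          rw [aval_zero h0] at hlt; omega
        have hpu : p u ≠ u := fun h => hu0 (eq_zero_of_self_parent h0 hr h)
        have hrpu : reach p (p u) := reach_of_mem_ancF h0 hr parent_mem_ancF
        have hdlt : dep p (p u) < dep p u := dep_lt h0 hr parent_mem_ancF hpu
        have hk' : k ≤ aval p (p u) w := by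
          have := aval_succ h0 hr hu0 w
          split at this <;> omega
        obtain ⟨x, hx, hxval⟩ := ih (p u) (by omega) hrpu k hk'
        exact ⟨x, ancF_mono parent_mem_ancF hx, hxval⟩

/-- chain-child: if `u'` is a strict ancestor of `u`, there is a vertex `c` on the
chain of `u` with parent `u'` that is not a (weak) ancestor of `u'`. -/
lemma exists_chain_child {p : Fin (n+1) → Fin (n+1)} (h0 : p 0 = 0) {u u' : Fin (n+1)}
    (hr : reach p u) (hu' : u' ∈ ancF p u) (hne : u' ≠ u) :
    ∃ c, p c = u' ∧ c ∈ ancF p u ∧ c ∉ ancF p u' := by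
  classical
  obtain ⟨k0, hk0⟩ := mem_ancF.1 hu'
  have hk0pos : 0 < k0 := by
    rcases Nat.eq_zero_or_pos k0 with rfl | h
    · simp only [Function.iterate_zero, id_eq] at hk0
      exact absurd hk0.symm hne
    · exact h
  have hex : ∃ j, 0 < j ∧ p^[j] u ∈ ancF p u' := ⟨k0, hk0pos, by rw [hk0]; exact self_mem_ancF⟩
  set j := Nat.find hex with hj
  obtain ⟨hjpos, hjmem⟩ := Nat.find_spec hex
  have hstep : p (p^[j-1] u) = p^[j] u := by
    conv_rhs => rw [show j = (j-1)+1 by omega]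
    rw [Function.iterate_succ_apply']
  have hyu : p^[j] u ∈ ancF p u := mem_ancF.2 ⟨j, rfl⟩
  have hjk : j ≤ k0 := Nat.find_min' hex ⟨hk0pos, by rw [hk0]; exact self_mem_ancF⟩
  have hu'y : u' ∈ ancF p (p^[j] u) := by
    refine mem_ancF.2 ⟨k0 - j, ?_⟩
    rw [← Function.iterate_add_apply, show k0 - j + j = k0 by omega, hk0]
  have hyeq : p^[j] u = u' :=
    ancF_antisymm h0 (reach_of_mem_ancF h0 hr hu') hjmem hu'y
  refine ⟨p^[j-1] u, by rw [hstep, hyeq], mem_ancF.2 ⟨j-1, rfl⟩, ?_⟩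
  intro hc
  rcases Nat.eq_zero_or_pos (j-1) with h1 | h1
  · rw [h1] at hc
    simp only [Function.iterate_zero, id_eq] at hc
    exact hne (ancF_antisymm h0 hr hu' hc)
  · exact (Nat.find_min hex (m := j-1) (by omega)) ⟨h1, hc⟩

end KW
namespace KW
open Finset

variable {n : ℕ}

/-! ### Section 2: valid DFS orders -/

structure VOrd (n : ℕ) (p : Fin (n+1) → Fin (n+1)) : Type where
  sig : ℕ → Fin (n+1)
  sig0 : sig 0 = 0
  inj : ∀ ⦃s t : ℕ⦄, s ≤ n → t ≤ n → sig s = sig t → s = t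
  stack : ∀ t, 1 ≤ t → t ≤ n → p (sig t) ∈ ancF p (sig (t-1))
  sib : ∀ s t, 1 ≤ s → s < t → t ≤ n → p (sig s) = p (sig t) → sig t < sig s

variable {p : Fin (n+1) → Fin (n+1)}

lemma vord_surj (O : VOrd n p) : ∀ v, ∃ t, t ≤ n ∧ O.sig t = v := by
  intro v
  have hinj : Function.Injective (fun i : Fin (n+1) => O.sig i.val) := by
    intro i j hij
    exact Fin.ext (O.inj (Nat.lt_succ_iff.1 i.isLt) (Nat.lt_succ_iff.1 j.isLt) hij)
  have hsurj := Finite.surjective_of_injective hinj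
  obtain ⟨i, hi⟩ := hsurj v
  exact ⟨i.val, Nat.lt_succ_iff.1 i.isLt, hi⟩

noncomputable def VOrd.pos (O : VOrd n p) (v : Fin (n+1)) : ℕ :=
  Classical.choose (vord_surj O v)

lemma VOrd.pos_le (O : VOrd n p) (v : Fin (n+1)) : O.pos v ≤ n :=
  (Classical.choose_spec (vord_surj O v)).1

lemma VOrd.sig_pos (O : VOrd n p) (v : Fin (n+1)) : O.sig (O.pos v) = v :=
  (Classical.choose_spec (vord_surj O v)).2

lemma VOrd.pos_sig (O : VOrd n p) {t : ℕ} (ht : t ≤ n) : O.pos (O.sig t) = t :=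
  O.inj (O.pos_le _) ht (O.sig_pos _)

lemma VOrd.pos_zero (O : VOrd n p) : O.pos 0 = 0 := by
  have := O.pos_sig (t := 0) (Nat.zero_le n)
  rwa [O.sig0] at this

lemma VOrd.sig_ne_zero (O : VOrd n p) {t : ℕ} (ht1 : 1 ≤ t) (ht : t ≤ n) : O.sig t ≠ 0 := by
  intro h
  have := O.inj ht (Nat.zero_le n) (by rw [h, O.sig0])
  omega

/-- ancestors of `sig t` appear at positions `≤ t`. -/
lemma VOrd.anc_before (O : VOrd n p) (h0 : p 0 = 0) :
    ∀ t, t ≤ n → ∀ x ∈ ancF p (O.sig t), ∃ s, s ≤ t ∧ O.sig s = x := by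
  intro t
  induction t with
  | zero =>
      intro _ x hx
      rw [O.sig0, ancF_zero h0] at hx
      simp only [Finset.mem_singleton] at hx
      exact ⟨0, le_rfl, by rw [O.sig0, hx]⟩
  | succ t ih =>
      intro ht x hx
      rw [ancF_succ] at hx
      rcases Finset.mem_insert.1 hx with rfl | hx
      · exact ⟨t+1, le_rfl, rfl⟩
      · have hs := O.stack (t+1) (Nat.succ_le_succ (Nat.zero_le t)) ht
        simp only [Nat.add_sub_cancel] at hs
        obtain ⟨s, hst, hsx⟩ := ih (by omega) x (ancF_mono hs hx)
        exact ⟨s, by omega, hsx⟩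

lemma VOrd.pos_lt_of_anc (O : VOrd n p) (h0 : p 0 = 0) {t : ℕ} (ht : t ≤ n)
    {x : Fin (n+1)} (hx : x ∈ ancF p (O.sig t)) (hne : x ≠ O.sig t) : O.pos x < t := by
  obtain ⟨s, hst, hsx⟩ := O.anc_before h0 t ht x hx
  have : O.pos x = s := by rw [← hsx]; exact O.pos_sig (by omega)
  rcases Nat.lt_or_ge s t with h | h
  · omega
  · have hst' : s = t := by omega
    subst hst'
    exact (hne hsx.symm).elim

/-- once the walk attaches at `p (sig t)`, previously seen vertices on later chains
lie on the chain of `p (sig t)`. -/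
lemma VOrd.popped (O : VOrd n p) (h0 : p 0 = 0) {t : ℕ} (ht1 : 1 ≤ t) :
    ∀ t', t ≤ t' → t' ≤ n →
      ∀ x ∈ ancF p (O.sig t'), (∃ s, s < t ∧ O.sig s = x) → x ∈ ancF p (p (O.sig t)) := by
  intro t'
  induction t' with
  | zero =>
      intro h h' x hx hold
      omega
  | succ t' ih =>
      intro h h' x hx hold
      rcases Nat.lt_or_ge t (t'+1) with hlt | hge
      · -- t ≤ t'
        rw [ancF_succ] at hx
        rcases Finset.mem_insert.1 hx with rfl | hx
        · obtain ⟨s, hs, hseq⟩ := hold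
          have := O.inj (by omega) (by omega) hseq
          omega
        · have hs := O.stack (t'+1) (by omega) h'
          simp only [Nat.add_sub_cancel] at hs
          exact ih (by omega) (by omega) x (ancF_mono hs hx) hold
      · -- t = t'+1
        have : t = t' + 1 := by omega
        subst this
        rw [ancF_succ] at hx
        rcases Finset.mem_insert.1 hx with rfl | hx
        · obtain ⟨s, hs, hseq⟩ := hold
          have := O.inj (by omega) (by omega) hseq
          omega
        · exact hx

/-- the inversion count at a vertex -/
noncomputable def invAt (p : Fin (n+1) → Fin (n+1)) (v : Fin (n+1)) : ℕ := aval p (p v) v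

lemma VOrd.invAt_le (O : VOrd n p) (h0 : p 0 = 0) (hr : ∀ v, reach p v)
    {t : ℕ} (ht1 : 1 ≤ t) (ht : t ≤ n) : invAt p (O.sig t) ≤ t - 1 := by
  set v := O.sig t with hv
  have hv0 : v ≠ 0 := O.sig_ne_zero ht1 ht
  have hcard : ((ancF p (p v)).filter (fun x => v < x)).card ≤ (Finset.Ico 1 t).card := by
    apply Finset.card_le_card_of_injOn O.pos
    · intro x hx
      simp only [Finset.mem_coe, Finset.mem_filter] at hx
      have hxanc : x ∈ ancF p v := by
        rw [ancF_succ]; exact Finset.mem_insert_of_mem hx.1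
      have hxne : x ≠ v := by
        intro hh; rw [hh] at hx
        exact not_mem_ancF_parent h0 (hr v) hv0 hx.1
      have hlt := O.pos_lt_of_anc h0 ht hxanc hxne
      have hx0 : x ≠ 0 := by
        intro hh
        rw [hh] at hx
        exact absurd hx.2 (by simp [Fin.lt_def])
      have : O.pos x ≠ 0 := by
        intro hh
        apply hx0
        have h' := O.sig_pos x
        rw [hh, O.sig0] at h'
        exact h'.symm
      simp only [Finset.coe_Ico, Set.mem_Ico]
      omega
    · intro x hx y hy hxy
      have hx' := O.sig_pos x
      have hy' := O.sig_pos y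
      rw [hxy] at hx'
      rw [← hx', hy']
  rw [Nat.card_Ico] at hcard
  exact hcard

/-- Uniqueness auxiliary. -/
lemma vord_unique_aux (h0 : p 0 = 0) (hr : ∀ v, reach p v) (O O' : VOrd n p)
    {t : ℕ} (ht1 : 1 ≤ t) (ht : t ≤ n)
    (IH : ∀ s, s < t → O.sig s = O'.sig s)
    (hv : O.sig t ≠ O'.sig t)
    (he : p (O'.sig t) ∈ ancF p (p (O.sig t))) : p (O'.sig t) = p (O.sig t) := by
  set v := O.sig t with hvdef
  set v' := O'.sig t with hv'def
  set e := p v with hedef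
  set e' := p v' with he'def
  -- position of v in O'
  have hT1 : ∃ t₁, t₁ ≤ n ∧ O'.sig t₁ = v := vord_surj O' v
  obtain ⟨t₁, ht₁n, ht₁v⟩ := hT1
  have ht₁gt : t < t₁ := by
    rcases Nat.lt_trichotomy t₁ t with h | h | h
    · exfalso
      have : O.sig t₁ = v := by rw [IH t₁ h]; exact ht₁v
      have := O.inj (by omega) ht this
      omega
    · exfalso; apply hv; rw [← ht₁v, h]
    · exact h
  -- e is on the chain of O'.sig (t₁ - 1) by the stack property of O'
  have hstack := O'.stack t₁ (by omega) ht₁n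
  rw [ht₁v] at hstack
  -- e appeared before time t
  have heold : ∃ s, s < t ∧ O'.sig s = e := by
    have hchain := O.stack t ht1 ht
    have hieq : ancF p (O.sig (t-1)) = ancF p (O'.sig (t-1)) := by
      rw [IH (t-1) (by omega)]
    rw [hieq] at hchain
    obtain ⟨s, hs, hseq⟩ := O'.anc_before h0 (t-1) (by omega) e hchain
    exact ⟨s, by omega, hseq⟩
  have hepop : e ∈ ancF p (p (O'.sig t)) :=
    O'.popped h0 ht1 (t₁ - 1) (by omega) (by omega) e hstack heold
  exact ancF_antisymm h0 (hr e) he hepop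

/-- Valid orders are unique. -/
lemma vord_unique (h0 : p 0 = 0) (hr : ∀ v, reach p v) (O O' : VOrd n p) :
    ∀ t, t ≤ n → O.sig t = O'.sig t := by
  intro t
  induction t using Nat.strong_induction_on with
  | _ t IH =>
    intro ht
    by_contra hv
    have ht1 : 1 ≤ t := by
      rcases Nat.eq_zero_or_pos t with rfl | h
      · exact absurd (by rw [O.sig0, O'.sig0]) hv
      · exact h
    have IH' : ∀ s, s < t → O.sig s = O'.sig s := fun s hs => IH s hs (by omega)
    set v := O.sig t
    set v' := O'.sig t
    -- both parents are on the common chain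
    have hcv : p v ∈ ancF p (O.sig (t-1)) := O.stack t ht1 ht
    have hcv' : p v' ∈ ancF p (O.sig (t-1)) := by
      rw [IH' (t-1) (by omega)]; exact O'.stack t ht1 ht
    have heq : p v' = p v := by
      rcases ancF_total hcv' hcv with h | h
      · exact vord_unique_aux h0 hr O O' ht1 ht IH' hv h
      · exact (vord_unique_aux h0 hr O' O ht1 ht
          (fun s hs => (IH' s hs).symm) (fun hh => hv hh.symm) h).symm
    -- siblings: contradiction
    have hT1 : ∃ t₁, t₁ ≤ n ∧ O'.sig t₁ = v := vord_surj O' v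
    obtain ⟨t₁, ht₁n, ht₁v⟩ := hT1
    have ht₁gt : t < t₁ := by
      rcases Nat.lt_trichotomy t₁ t with h | h | h
      · exfalso
        have : O.sig t₁ = v := by rw [IH' t₁ h]; exact ht₁v
        have := O.inj (by omega) ht this
        omega
      · exfalso; exact hv (by rw [← ht₁v, h])
      · exact h
    have hT2 : ∃ t₂, t₂ ≤ n ∧ O.sig t₂ = v' := vord_surj O v'
    obtain ⟨t₂, ht₂n, ht₂v⟩ := hT2
    have ht₂gt : t < t₂ := by
      rcases Nat.lt_trichotomy t₂ t with h | h | h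
      · exfalso
        have : O'.sig t₂ = v' := by rw [← IH' t₂ h]; exact ht₂v
        have := O'.inj (by omega) ht this
        omega
      · exfalso; exact hv (show v' = v by rw [← ht₂v, h]).symm
      · exact h
    -- in O : v at t, v' at t₂, siblings ⇒ v' < v
    have h1 : v' < v := by
      have := O.sib t t₂ ht1 ht₂gt ht₂n (by rw [ht₂v, heq])
      rwa [ht₂v] at this
    -- in O' : v' at t, v at t₁, siblings ⇒ v < v'
    have h2 : v < v' := by
      have := O'.sib t t₁ ht1 ht₁gt ht₁n (by rw [ht₁v, heq])
      rwa [ht₁v] at this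
    exact absurd h1 (lt_asymm h2)

end KW
namespace KW
open Finset

variable {n : ℕ}

/-! ### Section 3: existence of a valid order -/

noncomputable def pickMax {α : Type*} (key : α → ℕ) (s : Finset α) (d : α) : α :=
  if h : s.Nonempty then (Finset.exists_max_image s key h).choose else d

lemma pickMax_mem {α : Type*} {key : α → ℕ} {s : Finset α} {d : α} (h : s.Nonempty) :
    pickMax key s d ∈ s := by
  rw [pickMax, dif_pos h]
  exact (Finset.exists_max_image s key h).choose_spec.1

lemma pickMax_max {α : Type*} {key : α → ℕ} {s : Finset α} {d : α} (h : s.Nonempty) :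
    ∀ x ∈ s, key x ≤ key (pickMax key s d) := by
  rw [pickMax, dif_pos h]
  exact (Finset.exists_max_image s key h).choose_spec.2

variable {p : Fin (n+1) → Fin (n+1)}

/-- the lexicographic key: first depth of the attach point, then label. -/
noncomputable def tkey (p : Fin (n+1) → Fin (n+1)) (uw : Fin (n+1) × Fin (n+1)) : ℕ :=
  dep p uw.1 * (n+2) + uw.2.val

lemma tkey_lt_of_dep_lt {uw uw' : Fin (n+1) × Fin (n+1)}
    (h : dep p uw.1 < dep p uw'.1) : tkey p uw < tkey p uw' := by
  have h2 : uw.2.val ≤ n := Nat.lt_succ_iff.1 uw.2.isLt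
  have : tkey p uw < (dep p uw.1 + 1) * (n+2) := by
    rw [tkey]; ring_nf; omega
  calc tkey p uw < (dep p uw.1 + 1) * (n+2) := this
    _ ≤ dep p uw'.1 * (n+2) := Nat.mul_le_mul_right _ h
    _ ≤ tkey p uw' := Nat.le_add_right _ _

open Classical in
noncomputable def tcand (p : Fin (n+1) → Fin (n+1)) (sig : ℕ → Fin (n+1)) (t : ℕ) :
    Finset (Fin (n+1) × Fin (n+1)) :=
  univ.filter (fun uw =>
    uw.1 ∈ ancF p (sig (t-1)) ∧ uw.2 ∉ (Finset.range t).image sig ∧ p uw.2 = uw.1)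

lemma mem_tcand {sig : ℕ → Fin (n+1)} {t : ℕ} {uw : Fin (n+1) × Fin (n+1)} :
    uw ∈ tcand p sig t ↔
      uw.1 ∈ ancF p (sig (t-1)) ∧ uw.2 ∉ (Finset.range t).image sig ∧ p uw.2 = uw.1 := by
  simp [tcand]

lemma tcand_congr {sig sig' : ℕ → Fin (n+1)} {t : ℕ} (ht : 1 ≤ t)
    (h : ∀ s, s < t → sig s = sig' s) : tcand p sig t = tcand p sig' t := by
  have himg : (Finset.range t).image sig = (Finset.range t).image sig' :=
    Finset.image_congr (fun s hs => h s (Finset.mem_range.1 (by simpa using hs)))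
  unfold tcand
  rw [h (t-1) (by omega), himg]

noncomputable def tnext (p : Fin (n+1) → Fin (n+1)) (sig : ℕ → Fin (n+1)) (t : ℕ) :
    Fin (n+1) :=
  (pickMax (tkey p) (tcand p sig t) (0,0)).2

noncomputable def tF (p : Fin (n+1) → Fin (n+1)) : ℕ → (ℕ → Fin (n+1))
  | 0 => fun _ => 0
  | (t+1) => fun s => if s = t+1 then tnext p (tF p t) (t+1) else tF p t s

noncomputable def tsig (p : Fin (n+1) → Fin (n+1)) : ℕ → Fin (n+1) := fun t => tF p t t

lemma tF_agree : ∀ t' t s, s ≤ t → t ≤ t' → tF p t' s = tF p t s := by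
  intro t'
  induction t' with
  | zero => intro t s hs ht; interval_cases t; rfl
  | succ t' ih =>
      intro t s hs ht
      rcases Nat.lt_or_ge t (t'+1) with h | h
      · show tF p (t'+1) s = tF p t s
        have : s ≠ t'+1 := by omega
        simp only [tF, if_neg this]
        exact ih t s hs (by omega)
      · have : t = t'+1 := by omega
        subst this; rfl

lemma tF_eq_tsig {t s : ℕ} (hs : s ≤ t) : tF p t s = tsig p s := tF_agree t s s le_rfl hs

lemma tsig_zero : tsig p 0 = 0 := rfl

lemma tsig_succ (t : ℕ) : tsig p (t+1) = tnext p (tF p t) (t+1) := by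
  show tF p (t+1) (t+1) = _
  simp [tF]

lemma tsig_succ' (t : ℕ) : tsig p (t+1) = tnext p (tsig p) (t+1) := by
  have hc : tcand p (tF p t) (t+1) = tcand p (tsig p) (t+1) :=
    tcand_congr (by omega) (fun s hs => tF_eq_tsig (by omega))
  rw [tsig_succ]
  unfold tnext
  rw [hc]

/-- visited set -/
noncomputable def tvis (p : Fin (n+1) → Fin (n+1)) (t : ℕ) : Finset (Fin (n+1)) :=
  (Finset.range t).image (tsig p)

/-- the invariant for the greedy DFS construction -/
def TInv (p : Fin (n+1) → Fin (n+1)) (t : ℕ) : Prop :=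
  (∀ s s', s ≤ t → s' ≤ t → tsig p s = tsig p s' → s = s') ∧
  (∀ s, 1 ≤ s → s ≤ t → p (tsig p s) ∈ ancF p (tsig p (s-1))) ∧
  (∀ x, x ∈ tvis p (t+1) → x ∉ ancF p (tsig p t) →
    ∀ c, p c = x → c ≠ 0 → c ∈ tvis p (t+1)) ∧
  (∀ s, 1 ≤ s → s ≤ t → ∀ w, w ∉ tvis p (t+1) → p w = p (tsig p s) → w < tsig p s)

lemma mem_tvis {t : ℕ} {x : Fin (n+1)} : x ∈ tvis p t ↔ ∃ s, s < t ∧ tsig p s = x := by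
  simp [tvis, Finset.mem_image, Finset.mem_range]

lemma zero_mem_tvis {t : ℕ} (ht : 1 ≤ t) : (0 : Fin (n+1)) ∈ tvis p t :=
  mem_tvis.2 ⟨0, ht, rfl⟩

section TreeBuild

variable (h0 : p 0 = 0) (hr : ∀ v, reach p v)

include h0 hr

lemma tcand_nonempty {t : ℕ} (ht1 : 1 ≤ t) (ht : t ≤ n) (hinv : TInv p (t-1)) :
    (tcand p (tsig p) t).Nonempty := by
  classical
  obtain ⟨hK1, hK2, hK3, hK4⟩ := hinv
  -- unvisited vertex exists
  have hcard : (tvis p t).card ≤ t := le_trans (Finset.card_image_le) (by simp)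
  have hne : tvis p t ≠ univ := by
    intro h
    have := Finset.card_univ (α := Fin (n+1)) ▸ h ▸ hcard
    simp at this
    omega
  obtain ⟨w₀, hw₀⟩ : ∃ w₀, w₀ ∉ tvis p t := by
    by_contra hall
    push_neg at hall
    exact hne (Finset.eq_univ_iff_forall.2 hall)
  -- walk up to the first visited vertex
  have hex : ∃ k, p^[k] w₀ ∈ tvis p t := by
    obtain ⟨m, hm⟩ := hr w₀
    exact ⟨m, by rw [hm]; exact zero_mem_tvis ht1⟩
  set k₀ := Nat.find hex with hk₀def
  have hk₀ : p^[k₀] w₀ ∈ tvis p t := Nat.find_spec hex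
  have hk₀pos : 0 < k₀ := by
    rcases Nat.eq_zero_or_pos k₀ with h | h
    · rw [h] at hk₀; simp at hk₀; exact absurd hk₀ hw₀
    · exact h
  set x := p^[k₀] w₀ with hxdef
  set c := p^[k₀ - 1] w₀ with hcdef
  have hpc : p c = x := by
    rw [hcdef, hxdef, ← Function.iterate_succ_apply' p (k₀-1) w₀]
    congr 1; omega
  have hcunvis : c ∉ tvis p t := by
    rcases Nat.eq_zero_or_pos (k₀ - 1) with h | h
    · rw [hcdef, h]; simpa using hw₀
    · exact Nat.find_min hex (by omega)
  have hc0 : c ≠ 0 := by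
    intro hh; rw [hh] at hcunvis; exact hcunvis (zero_mem_tvis ht1)
  -- x must be on the current chain
  have hxchain : x ∈ ancF p (tsig p (t-1)) := by
    by_contra hxoff
    apply hcunvis
    have : x ∈ tvis p ((t-1)+1) := by rw [show t-1+1 = t by omega]; exact hk₀
    have := hK3 x this hxoff c hpc hc0
    rwa [show t-1+1 = t by omega] at this
  exact ⟨(x, c), mem_tcand.2 ⟨hxchain, by simpa [tvis] using hcunvis, hpc⟩⟩

lemma TInv_zero : TInv p 0 := by
  refine ⟨?_, ?_, ?_, ?_⟩
  · intro s s' hs hs' _; omega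
  · intro s hs hs'; omega
  · intro x hx hxoff c hpc hc0
    exfalso
    apply hxoff
    obtain ⟨s, hs, hsx⟩ := mem_tvis.1 hx
    interval_cases s
    rw [← hsx]
    exact self_mem_ancF
  · intro s hs hs' _ _ _; omega

lemma TInv_succ {t : ℕ} (ht : t + 1 ≤ n) (hinv : TInv p t) : TInv p (t+1) := by
  classical
  have hne := tcand_nonempty h0 hr (t := t+1) (by omega) ht hinv
  obtain ⟨hK1, hK2, hK3, hK4⟩ := hinv
  set ch := pickMax (tkey p) (tcand p (tsig p) (t+1)) (0,0) with hchdef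
  have hmem := pickMax_mem (key := tkey p) (d := ((0,0) : Fin (n+1) × Fin (n+1))) hne
  have hmax := pickMax_max (key := tkey p) (d := ((0,0) : Fin (n+1) × Fin (n+1))) hne
  rw [← hchdef] at hmem hmax
  obtain ⟨hchain, hunvis, hpar⟩ := mem_tcand.1 hmem
  have hveq : tsig p (t+1) = ch.2 := by
    rw [tsig_succ']; rfl
  simp only [Nat.add_sub_cancel] at hchain
  set u := ch.1 with hudef
  set v := ch.2 with hvdef
  -- basic facts
  have hvis_succ : ∀ x, x ∈ tvis p (t+2) ↔ (x = v ∨ x ∈ tvis p (t+1)) := by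
    intro x
    rw [mem_tvis, mem_tvis]
    constructor
    · rintro ⟨s, hs, hsx⟩
      rcases Nat.lt_or_ge s (t+1) with h | h
      · exact Or.inr ⟨s, h, hsx⟩
      · left; rw [← hsx, show s = t+1 by omega, hveq]
    · rintro (rfl | ⟨s, hs, hsx⟩)
      · exact ⟨t+1, by omega, hveq⟩
      · exact ⟨s, by omega, hsx⟩
  have hvnew : v ∉ tvis p (t+1) := by simpa [tvis] using hunvis
  have hchain_new : ancF p (tsig p (t+1)) = insert v (ancF p u) := by
    rw [hveq, ← hpar, ← ancF_succ]
  refine ⟨?_, ?_, ?_, ?_⟩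
  · -- injectivity
    intro s s' hs hs' hss
    rcases Nat.lt_or_ge s (t+1) with h | h <;> rcases Nat.lt_or_ge s' (t+1) with h' | h'
    · exact hK1 s s' (by omega) (by omega) hss
    · exfalso
      have hs'eq : s' = t+1 := by omega
      apply hvnew
      have hxx : tsig p s = v := by rw [hss, hs'eq, hveq]
      exact mem_tvis.2 ⟨s, h, hxx⟩
    · exfalso
      have hseq : s = t+1 := by omega
      apply hvnew
      have hxx : tsig p s' = v := by rw [← hss, hseq, hveq]
      exact mem_tvis.2 ⟨s', h', hxx⟩
    · omega
  · -- stack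
    intro s hs1 hs
    rcases Nat.lt_or_ge s (t+1) with h | h
    · exact hK2 s hs1 (by omega)
    · have : s = t+1 := by omega
      subst this
      simp only [Nat.add_sub_cancel]
      rw [hveq, hpar]
      exact hchain
  · -- K3
    intro x hx hxoff c hpc hc0 
    rw [hvis_succ] at hx
    rw [hchain_new] at hxoff
    have hxold : x ∈ tvis p (t+1) := by
      rcases hx with rfl | hx
      · exact absurd (Finset.mem_insert_self _ _) hxoff
      · exact hx
    rw [hvis_succ]
    rcases Classical.em (x ∈ ancF p (tsig p t)) with hxon | hxoff_old
    · -- x is on the old chain but not on the new one: no unvisited children remain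
      by_contra hcnew
      push_neg at hcnew
      obtain ⟨hcnev, hcold⟩ := hcnew
      -- (x, c) is a candidate
      have hcand : (x, c) ∈ tcand p (tsig p) (t+1) :=
        mem_tcand.2 ⟨by simpa using hxon, by simpa [tvis] using hcold, hpc⟩
      have hkey := hmax _ hcand
      -- but x is deeper than u
      have hdep : dep p u < dep p x := by
        rcases ancF_total hxon hchain with hxu | hux
        · exact absurd (Finset.mem_insert_of_mem hxu) hxoff
        · apply dep_lt h0 (hr x) hux
          intro hh
          exact hxoff (by rw [← hh]; exact Finset.mem_insert_of_mem self_mem_ancF)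
      exact absurd hkey (not_le.2 (tkey_lt_of_dep_lt hdep))
    · -- x was already off the old chain
      have := hK3 x hxold hxoff_old c hpc hc0
      exact Or.inr this
  · -- K4
    intro s hs1 hs w hwnew hpw
    have hwold : w ∉ tvis p (t+1) := by
      intro hh
      exact hwnew ((hvis_succ w).2 (Or.inr hh))
    rcases Nat.lt_or_ge s (t+1) with h | h
    · exact hK4 s hs1 (by omega) w hwold hpw
    · have : s = t+1 := by omega
      subst this
      rw [hveq] at hpw ⊢
      have hwv : w ≠ v := by
        intro hh
        exact hwnew ((hvis_succ w).2 (Or.inl hh))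
      have hcand : (u, w) ∈ tcand p (tsig p) (t+1) :=
        mem_tcand.2 ⟨by simpa using hchain, by simpa [tvis] using hwold, by rw [hpw, hpar]⟩
      have hkey := hmax _ hcand
      rw [tkey, tkey] at hkey
      rw [← hudef, ← hvdef] at hkey
      simp only at hkey
      have hle : w.val ≤ v.val := by omega
      have hlt : w.val < v.val := lt_of_le_of_ne hle (fun hh => hwv (Fin.ext hh))
      exact Fin.lt_def.2 hlt

lemma TInv_all : ∀ t, t ≤ n → TInv p t := by
  intro t
  induction t with
  | zero => intro _; exact TInv_zero h0 hr
  | succ t ih => intro ht; exact TInv_succ h0 hr ht (ih (by omega))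

/-- Existence of a valid order. -/
lemma exists_vord : Nonempty (VOrd n p) := by
  have hinv := TInv_all h0 hr n le_rfl
  obtain ⟨hK1, hK2, hK3, hK4⟩ := hinv
  refine ⟨⟨tsig p, tsig_zero, ?_, ?_, ?_⟩⟩
  · intro s t hs ht hst
    exact hK1 s t hs ht hst
  · intro t ht1 ht
    exact hK2 t ht1 ht
  · intro s t hs1 hst ht hpar
    -- use K4 of TInv (t-1)
    obtain ⟨hK1', hK2', hK3', hK4'⟩ := TInv_all h0 hr (t-1) (by omega)
    have hw : tsig p t ∉ tvis p ((t-1)+1) := by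
      rw [mem_tvis]
      rintro ⟨s', hs', hseq⟩
      have := hK1 s' t (by omega) ht hseq
      omega
    have := hK4' s hs1 (by omega) (tsig p t) hw hpar.symm
    exact this
end TreeBuild

end KW
namespace KW
open Finset

variable {n : ℕ} {p p' : Fin (n+1) → Fin (n+1)}

/-! ### Section 4: the map Φ and its injectivity -/

/-- the canonical valid order of a tree -/
noncomputable def ord (p : Fin (n+1) → Fin (n+1)) (h0 : p 0 = 0) (hr : ∀ v, reach p v) :
    VOrd n p :=
  (exists_vord h0 hr).some

/-- Φ : trees → parking functions -/
noncomputable def phi (p : Fin (n+1) → Fin (n+1)) (h0 : p 0 = 0) (hr : ∀ v, reach p v) :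
    Fin (n+1) → ℕ :=
  fun v => (ord p h0 hr).pos v - 1 - invAt p v

lemma phi_zero (h0 : p 0 = 0) (hr : ∀ v, reach p v) : phi p h0 hr 0 = 0 := by
  rw [phi, (ord p h0 hr).pos_zero]
  omega

lemma phi_key (h0 : p 0 = 0) (hr : ∀ v, reach p v) {t : ℕ} (ht1 : 1 ≤ t) (ht : t ≤ n) :
    phi p h0 hr ((ord p h0 hr).sig t) + invAt p ((ord p h0 hr).sig t) = t - 1 := by
  set O := ord p h0 hr
  have h1 := O.invAt_le h0 hr ht1 ht
  rw [phi, O.pos_sig ht]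
  omega

/-- ancestor sets of prefix-visited vertices agree in the two trees. -/
lemma ancF_prefix_eq (h0 : p 0 = 0) (h0' : p' 0 = 0) (hr : ∀ v, reach p v)
    (O : VOrd n p) (O' : VOrd n p') {t : ℕ} (ht : t ≤ n)
    (hpre : ∀ s, s < t → O.sig s = O'.sig s)
    (hpar : ∀ s, s < t → p (O.sig s) = p' (O'.sig s)) :
    ∀ s, s < t → ancF p' (O.sig s) = ancF p (O.sig s) := by
  intro s
  induction s using Nat.strong_induction_on with
  | _ s IH =>
    intro hs
    rcases Nat.eq_zero_or_pos s with rfl | hs1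
    · rw [O.sig0, ancF_zero h0, ancF_zero h0']
    · set x := O.sig s with hx
      have hx0 : x ≠ 0 := O.sig_ne_zero hs1 (by omega)
      have hpx : p x ≠ x := fun hh => hx0 (eq_zero_of_self_parent h0 (hr x) hh)
      have hpos : O.pos (p x) < s :=
        O.pos_lt_of_anc h0 (t := s) (by omega) parent_mem_ancF hpx
      have hpxeq : O.sig (O.pos (p x)) = p x := O.sig_pos _
      have hIH : ancF p' (p x) = ancF p (p x) := by
        have := IH (O.pos (p x)) hpos (by omega)
        rwa [hpxeq] at this
      have hpar' : p' x = p x := by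
        have h1 := hpar s hs
        have h2 := hpre s hs
        rw [← h2] at h1
        exact h1.symm
      calc ancF p' x = insert x (ancF p' (p' x)) := ancF_succ
        _ = insert x (ancF p' (p x)) := by rw [hpar']
        _ = insert x (ancF p (p x)) := by rw [hIH]
        _ = ancF p x := ancF_succ.symm

/-- The main auxiliary contradiction for injectivity. -/
lemma phi_inj_aux (h0 : p 0 = 0) (h0' : p' 0 = 0)
    (hr : ∀ v, reach p v) (hr' : ∀ v, reach p' v)
    (O : VOrd n p) (O' : VOrd n p') {t : ℕ} (ht1 : 1 ≤ t) (ht : t ≤ n)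
    (hpre : ∀ s, s < t → O.sig s = O'.sig s)
    (hpar : ∀ s, s < t → p (O.sig s) = p' (O'.sig s))
    (hbal : ∀ s t', 1 ≤ s → s ≤ n → 1 ≤ t' → t' ≤ n → O.sig s = O'.sig t' →
      invAt p' (O'.sig t') + s = invAt p (O.sig s) + t')
    (he : p' (O'.sig t) ∈ ancF p (p (O.sig t)))
    (horder : p' (O'.sig t) = p (O.sig t) → O'.sig t < O.sig t) :
    False := by
  classical
  set w := O.sig t with hwdef
  set w' := O'.sig t with hw'def
  set u := p w with hudef
  set u' := p' w' with hu'def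
  have hw0 : w ≠ 0 := O.sig_ne_zero ht1 ht
  have hw'0 : w' ≠ 0 := O'.sig_ne_zero ht1 ht
  -- position of w in O'
  obtain ⟨t₁, ht₁n, ht₁w⟩ := vord_surj O' w
  have ht₁ge : t ≤ t₁ := by
    by_contra hlt
    push_neg at hlt
    have : O.sig t₁ = w := by rw [hpre t₁ hlt]; exact ht₁w
    have := O.inj (by omega) ht this
    omega
  have ht₁1 : 1 ≤ t₁ := by omega
  -- the balance equation
  have hbal1 : invAt p' w + t = invAt p w + t₁ := by
    have := hbal t t₁ ht1 ht ht₁1 ht₁n ht₁w.symm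
    rwa [ht₁w] at this
  -- inv counts
  have hinvw : invAt p w = aval p u w := rfl
  -- decompose the ancestors of w in p'
  set S := (ancF p' (p' w)).filter (fun x => w < x) with hSdef
  have hScard : invAt p' w = S.card := rfl
  set Sold := S.filter (fun x => ∃ s, s < t ∧ O'.sig s = x) with hSolddef
  set Snew := S.filter (fun x => ¬ ∃ s, s < t ∧ O'.sig s = x) with hSnewdef
  have hsplit : Sold.card + Snew.card = S.card := Finset.card_filter_add_card_filter_not _
  -- chain of w in O'
  have hanc_w : ancF p' (p' w) ⊆ ancF p' (O'.sig t₁) := by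
    rw [ht₁w]
    exact ancF_mono parent_mem_ancF
  -- old part lands in the chain of u'
  have hold_sub : Sold ⊆ Finset.filter (fun x => w < x) (ancF p' u') := by
    intro x hx
    rw [hSolddef, Finset.mem_filter] at hx
    obtain ⟨hxS, hxold⟩ := hx
    rw [hSdef, Finset.mem_filter] at hxS
    refine Finset.mem_filter.2 ⟨?_, hxS.2⟩
    exact O'.popped h0' ht1 t₁ ht₁ge ht₁n x (hanc_w hxS.1) hxold
  have hold_card : Sold.card ≤ aval p' u' w := Finset.card_le_card hold_sub
  -- transfer : u' is prefix-visited
  have hu'chain : u' ∈ ancF p' (O'.sig (t-1)) := O'.stack t ht1 ht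
  obtain ⟨s₂, hs₂le, hs₂eq⟩ := O'.anc_before h0' (t-1) (by omega) u' hu'chain
  have hu'vis : O.sig s₂ = u' := by rw [hpre s₂ (by omega)]; exact hs₂eq
  have htransfer : ancF p' u' = ancF p u' := by
    have := ancF_prefix_eq h0 h0' hr O O' ht hpre hpar s₂ (by omega)
    rwa [hu'vis] at this
  have hu'le : aval p' u' w = aval p u' w := by
    rw [aval, aval, htransfer]
  have hu'u : aval p u' w ≤ aval p u w := aval_mono he
  -- new part is small
  have hnew_card : Snew.card ≤ t₁ - t := by
    have : Snew.card ≤ (Finset.Ico t t₁).card := by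
      apply Finset.card_le_card_of_injOn O'.pos
      · intro x hx
        rw [hSnewdef, Finset.mem_coe, Finset.mem_filter] at hx
        obtain ⟨hxS, hxnew⟩ := hx
        rw [hSdef, Finset.mem_filter] at hxS
        have hxw : x ≠ w := by
          intro hh
          rw [hh] at hxS
          exact not_mem_ancF_parent h0' (hr' w) hw0 hxS.1
        have hxlt : O'.pos x < t₁ := by
          apply O'.pos_lt_of_anc h0' ht₁n (hanc_w hxS.1)
          rw [ht₁w]; exact hxw
        have hxge : t ≤ O'.pos x := by
          by_contra hc
          push_neg at hc
          exact hxnew ⟨O'.pos x, hc, O'.sig_pos x⟩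
        simp only [Finset.coe_Ico, Set.mem_Ico]
        omega
      · intro x hx y hy hxy
        have hx' := O'.sig_pos x
        have hy' := O'.sig_pos y
        rw [hxy] at hx'
        rw [← hx', hy']
    rwa [Nat.card_Ico] at this
  -- forcing equalities
  have hSoldeq : Sold.card = aval p u w := by omega
  have hSneweq : Snew.card = t₁ - t := by omega
  have havaleq : aval p u' w = aval p u w := by omega
  -- if t < t₁ then w' is an ancestor of w in p' with w < w'
  have hw'anc : t < t₁ → w < w' ∧ w' ∈ ancF p' (p' w) := by
    intro htlt
    have hinj : Set.InjOn O'.pos Snew := by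
      intro x hx y hy hxy
      have hx' := O'.sig_pos x
      have hy' := O'.sig_pos y
      rw [hxy] at hx'
      rw [← hx', hy']
    have hmaps : ∀ x ∈ Snew, O'.pos x ∈ Finset.Ico t t₁ := by
      intro x hx
      rw [hSnewdef, Finset.mem_filter] at hx
      obtain ⟨hxS, hxnew⟩ := hx
      rw [hSdef, Finset.mem_filter] at hxS
      have hxw : x ≠ w := by
        intro hh
        rw [hh] at hxS
        exact not_mem_ancF_parent h0' (hr' w) hw0 hxS.1
      have hxlt : O'.pos x < t₁ := by
        apply O'.pos_lt_of_anc h0' ht₁n (hanc_w hxS.1)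
        rw [ht₁w]; exact hxw
      have hxge : t ≤ O'.pos x := by
        by_contra hc
        push_neg at hc
        exact hxnew ⟨O'.pos x, hc, O'.sig_pos x⟩
      simp only [Finset.mem_Ico]
      omega
    have himg : Snew.image O'.pos = Finset.Ico t t₁ := by
      apply Finset.eq_of_subset_of_card_le
      · intro y hy
        obtain ⟨x, hx, rfl⟩ := Finset.mem_image.1 hy
        exact hmaps x hx
      · rw [Finset.card_image_of_injOn hinj, hSneweq, Nat.card_Ico]
    have htmem : t ∈ Snew.image O'.pos := by
      rw [himg]; simp only [Finset.mem_Ico]; omega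
    obtain ⟨x, hx, hxt⟩ := Finset.mem_image.1 htmem
    have hxw' : x = w' := by
      have := O'.sig_pos x
      rw [hxt] at this
      rw [← this]
    subst hxw'
    rw [hSnewdef, Finset.mem_filter, hSdef, Finset.mem_filter] at hx
    exact ⟨hx.1.2, hx.1.1⟩
  -- now case on u' = u
  rcases Classical.em (u' = u) with heq | hne
  · -- same parent: w ≠ w' forces t < t₁, then w < w', contradicting horder
    have hlt := horder heq
    have htlt : t < t₁ := by
      rcases Nat.lt_or_ge t t₁ with h | h
      · exact h
      · exfalso
        have : t₁ = t := by omega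
        subst this
        rw [ht₁w] at hw'def
        rw [← hw'def] at hlt
        exact lt_irrefl _ hlt
    obtain ⟨hww', _⟩ := hw'anc htlt
    exact absurd hww' (lt_asymm hlt)
  · -- u' is a strict ancestor of u : chain-child argument
    obtain ⟨c, hpc, hcu, hcnu'⟩ := exists_chain_child h0 (hr u) he hne
    -- c < w
    have hc0 : c ≠ 0 := by
      intro hh
      rw [hh] at hcnu'
      exact hcnu' (zero_mem_ancF (hr u'))
    have hcltw : c < w := by
      -- c ≤ w from the aval equality
      have hsub : insert c ((ancF p u').filter (fun x => w < x)) ⊆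
          (ancF p u).filter (fun x => w < x) ∨ ¬ w < c := by
        rcases Classical.em (w < c) with h | h
        · left
          intro x hx
          rcases Finset.mem_insert.1 hx with rfl | hx
          · exact Finset.mem_filter.2 ⟨hcu, h⟩
          · obtain ⟨h1, h2⟩ := Finset.mem_filter.1 hx
            exact Finset.mem_filter.2 ⟨ancF_mono he h1, h2⟩
        · right; exact h
      have hnlt : ¬ w < c := by
        rcases hsub with hsub | h
        · intro hwc
          have hcard := Finset.card_le_card hsub
          rw [Finset.card_insert_of_notMem (fun hh =>
            hcnu' (Finset.mem_of_mem_filter _ hh))] at hcard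
          have : aval p u' w + 1 ≤ aval p u w := hcard
          omega
        · exact h
      -- c ≠ w since c is visited before t
      have hcvis : ∃ s, s ≤ t - 1 ∧ O.sig s = c := by
        have hchain : c ∈ ancF p (O.sig (t-1)) := by
          have huchain : u ∈ ancF p (O.sig (t-1)) := O.stack t ht1 ht
          exact ancF_mono huchain hcu
        exact O.anc_before h0 (t-1) (by omega) c hchain
      have hcw : c ≠ w := by
        obtain ⟨s, hs, hseq⟩ := hcvis
        intro hh
        rw [hh] at hseq
        have := O.inj (by omega) ht hseq
        omega
      rcases lt_trichotomy c w with h | h | h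
      · exact h
      · exact absurd h hcw
      · exact absurd h hnlt
    -- c is a child of u' in p' as well, visited at some position s₀ < t in O'
    obtain ⟨s₀, hs₀le, hs₀eq⟩ := by
      have hchain : c ∈ ancF p (O.sig (t-1)) := by
        have huchain : u ∈ ancF p (O.sig (t-1)) := O.stack t ht1 ht
        exact ancF_mono huchain hcu
      exact O.anc_before h0 (t-1) (by omega) c hchain
    have hs₀eq' : O'.sig s₀ = c := by rw [← hpre s₀ (by omega)]; exact hs₀eq
    have hs₀1 : 1 ≤ s₀ := by
      rcases Nat.eq_zero_or_pos s₀ with rfl | h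
      · exfalso; apply hc0; rw [← hs₀eq', O'.sig0]
      · exact h
    have hp'c : p' c = u' := by
      have h1 := hpar s₀ (by omega)
      rw [hs₀eq, hs₀eq'] at h1
      rw [← h1, hpc]
    -- sibling order in O' : w' < c
    have hsib : w' < c := by
      have := O'.sib s₀ t hs₀1 (by omega) ht (by rw [hs₀eq', hp'c])
      rwa [hs₀eq'] at this
    -- final contradiction
    rcases Nat.lt_or_ge t t₁ with htlt | htge
    · obtain ⟨hww', _⟩ := hw'anc htlt
      have : w < c := lt_trans hww' hsib
      exact absurd this (lt_asymm hcltw)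
    · -- t₁ = t : w' = w
      have : t₁ = t := by omega
      subst this
      have hww' : w' = w := by rw [hw'def, ← ht₁w]
      rw [hww'] at hsib
      exact absurd hsib (lt_asymm hcltw)

end KW
namespace KW
open Finset

variable {n : ℕ} {p p' : Fin (n+1) → Fin (n+1)}

/-- Global injectivity of Φ. -/
theorem phi_inj (h0 : p 0 = 0) (h0' : p' 0 = 0)
    (hr : ∀ v, reach p v) (hr' : ∀ v, reach p' v)
    (hphi : phi p h0 hr = phi p' h0' hr') : p = p' := by
  classical
  set O := ord p h0 hr with hO
  set O' := ord p' h0' hr' with hO'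
  have hphiv : ∀ v, phi p h0 hr v = phi p' h0' hr' v := fun v => by rw [hphi]
  have main : ∀ t, t ≤ n → O.sig t = O'.sig t ∧ p (O.sig t) = p' (O'.sig t) := by
    intro t
    induction t using Nat.strong_induction_on with
    | _ t IH =>
      intro ht
      have hpre : ∀ s, s < t → O.sig s = O'.sig s := fun s hs => (IH s hs (by omega)).1
      have hpar : ∀ s, s < t → p (O.sig s) = p' (O'.sig s) := fun s hs => (IH s hs (by omega)).2
      rcases Nat.eq_zero_or_pos t with rfl | ht1
      · refine ⟨by rw [O.sig0, O'.sig0], ?_⟩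
        rw [O.sig0, O'.sig0, h0, h0']
      by_contra hdiff
      -- balance equations
      have hbal : ∀ s t', 1 ≤ s → s ≤ n → 1 ≤ t' → t' ≤ n → O.sig s = O'.sig t' →
          invAt p' (O'.sig t') + s = invAt p (O.sig s) + t' := by
        intro s t' hs1 hs ht'1 ht' hst
        have k1 := phi_key h0 hr hs1 hs
        have k2 := phi_key h0' hr' ht'1 ht'
        have k3 := hphiv (O.sig s)
        rw [← hO] at k1
        rw [← hO'] at k2
        rw [hst] at k1 k3 ⊢
        omega
      have hbal' : ∀ s t', 1 ≤ s → s ≤ n → 1 ≤ t' → t' ≤ n → O'.sig s = O.sig t' →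
          invAt p (O.sig t') + s = invAt p' (O'.sig s) + t' := by
        intro s t' hs1 hs ht'1 ht' hst
        have k1 := phi_key h0' hr' hs1 hs
        have k2 := phi_key h0 hr ht'1 ht'
        have k3 := hphiv (O.sig t')
        rw [← hO'] at k1
        rw [← hO] at k2
        rw [hst] at k1 ⊢
        omega
      have hpre' : ∀ s, s < t → O'.sig s = O.sig s := fun s hs => (hpre s hs).symm
      have hpar' : ∀ s, s < t → p' (O'.sig s) = p (O.sig s) := fun s hs => (hpar s hs).symm
      -- both parents belong to the common chain
      have hcu : p (O.sig t) ∈ ancF p (O.sig (t-1)) := O.stack t ht1 ht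
      have hcu' : p' (O'.sig t) ∈ ancF p (O.sig (t-1)) := by
        have h1 := O'.stack t ht1 ht
        have h2 : ancF p' (O.sig (t-1)) = ancF p (O.sig (t-1)) :=
          ancF_prefix_eq h0 h0' hr O O' ht hpre hpar (t-1) (by omega)
        rw [← hpre (t-1) (by omega)] at h1
        rw [← h2]
        exact h1
      -- case analysis
      rcases Classical.em (p' (O'.sig t) = p (O.sig t)) with hueq | hune
      · -- equal parents : labels must differ
        have hwne : O.sig t ≠ O'.sig t := by
          intro hw
          exact hdiff ⟨hw, by rw [hw, hueq, hw]⟩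
        rcases lt_trichotomy (O'.sig t) (O.sig t) with hlt | heq | hlt
        · exact phi_inj_aux h0 h0' hr hr' O O' ht1 ht hpre hpar hbal
            (hueq ▸ self_mem_ancF) (fun _ => hlt)
        · exact hwne heq.symm
        · refine phi_inj_aux h0' h0 hr' hr O' O ht1 ht hpre' hpar' hbal' ?_ (fun _ => hlt)
          rw [hueq]
          exact self_mem_ancF
      · rcases ancF_total hcu' hcu with he | he
        · exact phi_inj_aux h0 h0' hr hr' O O' ht1 ht hpre hpar hbal he
            (fun h => absurd h hune)
        · -- u ∈ ancF p u' : transfer to p' and swap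
          have hu'pos : ∃ s₂, s₂ ≤ t-1 ∧ O.sig s₂ = p' (O'.sig t) := by
            have h1 := O'.stack t ht1 ht
            rw [← hpre (t-1) (by omega)] at h1
            have h2 : ancF p' (O.sig (t-1)) = ancF p (O.sig (t-1)) :=
              ancF_prefix_eq h0 h0' hr O O' ht hpre hpar (t-1) (by omega)
            rw [h2] at h1
            exact O.anc_before h0 (t-1) (by omega) _ h1
          obtain ⟨s₂, hs₂, hs₂eq⟩ := hu'pos
          have htrans : ancF p' (p' (O'.sig t)) = ancF p (p' (O'.sig t)) := by
            have := ancF_prefix_eq h0 h0' hr O O' ht hpre hpar s₂ (by omega)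
            rwa [hs₂eq] at this
          refine phi_inj_aux h0' h0 hr' hr O' O ht1 ht hpre' hpar' hbal' ?_
            (fun h => absurd h.symm hune)
          rw [htrans]
          exact he
  funext v
  obtain ⟨t, ht, hv⟩ := vord_surj O v
  have h1 := (main t ht).1
  have h2 := (main t ht).2
  rw [← h1] at h2
  rw [← hv]
  exact h2

end KW
namespace KW
open Finset

variable {n : ℕ}

/-! ### Section 5a: partial states -/

lemma iterate_update_eq {q : Fin (n+1) → Fin (n+1)} {v u x : Fin (n+1)}
    (hv : v ∉ ancF q x) : ∀ k, (Function.update q v u)^[k] x = q^[k] x := by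
  intro k
  induction k with
  | zero => rfl
  | succ k ih =>
      rw [Function.iterate_succ_apply', Function.iterate_succ_apply', ih]
      apply Function.update_of_ne
      intro hh
      exact hv (by rw [← hh]; exact mem_ancF.2 ⟨k, rfl⟩)

lemma ancF_update {q : Fin (n+1) → Fin (n+1)} {v u x : Fin (n+1)}
    (hv : v ∉ ancF q x) : ancF (Function.update q v u) x = ancF q x := by
  ext y
  rw [mem_ancF, mem_ancF]
  constructor
  · rintro ⟨k, hk⟩; exact ⟨k, by rw [← iterate_update_eq hv k]; exact hk⟩
  · rintro ⟨k, hk⟩; exact ⟨k, by rw [iterate_update_eq hv k]; exact hk⟩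

lemma aval_update {q : Fin (n+1) → Fin (n+1)} {v u x w : Fin (n+1)}
    (hv : v ∉ ancF q x) : aval (Function.update q v u) x w = aval q x w := by
  rw [aval, aval, ancF_update hv]

lemma reach_update {q : Fin (n+1) → Fin (n+1)} {v u x : Fin (n+1)}
    (hv : v ∉ ancF q x) (hr : reach q x) : reach (Function.update q v u) x := by
  obtain ⟨k, hk⟩ := hr
  exact ⟨k, by rw [iterate_update_eq hv k]; exact hk⟩

/-- invariants of the partial reconstruction state -/
structure GoodState (P : Fin (n+1) → ℕ) (t : ℕ) (sig : ℕ → Fin (n+1))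
    (q : Fin (n+1) → Fin (n+1)) : Prop where
  sig0 : sig 0 = 0
  q0 : q 0 = 0
  inj : ∀ s s', s ≤ t → s' ≤ t → sig s = sig s' → s = s'
  qjunk : ∀ x, (∀ s, s ≤ t → sig s ≠ x) → q x = x
  parentEarlier : ∀ s, 1 ≤ s → s ≤ t → ∃ s', s' < s ∧ q (sig s) = sig s'
  stack : ∀ s, 1 ≤ s → s ≤ t → q (sig s) ∈ ancF q (sig (s-1))
  sib : ∀ s s', 1 ≤ s → s < s' → s' ≤ t → q (sig s) = q (sig s') → sig s' < sig s
  consist : ∀ s, 1 ≤ s → s ≤ t → P (sig s) + aval q (q (sig s)) (sig s) = s - 1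
  lower : ∀ w, (∀ s, s ≤ t → sig s ≠ w) → P w + aval q (sig t) w ≥ t

namespace GoodState

variable {P : Fin (n+1) → ℕ} {t : ℕ} {sig : ℕ → Fin (n+1)} {q : Fin (n+1) → Fin (n+1)}

lemma reach_vis (G : GoodState P t sig q) : ∀ s, s ≤ t → reach q (sig s) := by
  intro s
  induction s using Nat.strong_induction_on with
  | _ s IH =>
    intro hs
    rcases Nat.eq_zero_or_pos s with rfl | hs1
    · rw [G.sig0]; exact ⟨0, rfl⟩
    · obtain ⟨s', hs', hq⟩ := G.parentEarlier s hs1 hs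
      obtain ⟨k, hk⟩ := IH s' hs' (by omega)
      exact ⟨k + 1, by rw [Function.iterate_add_apply]
                       simp only [Function.iterate_one]
                       rw [hq]; exact hk⟩

lemma anc_before (G : GoodState P t sig q) :
    ∀ s, s ≤ t → ∀ x ∈ ancF q (sig s), ∃ s', s' ≤ s ∧ sig s' = x := by
  intro s
  induction s with
  | zero =>
      intro _ x hx
      rw [G.sig0, ancF_zero G.q0] at hx
      simp only [Finset.mem_singleton] at hx
      exact ⟨0, le_rfl, by rw [G.sig0, hx]⟩
  | succ s ih =>
      intro hs x hx
      rw [ancF_succ] at hx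
      rcases Finset.mem_insert.1 hx with rfl | hx
      · exact ⟨s+1, le_rfl, rfl⟩
      · have hst := G.stack (s+1) (by omega) hs
        simp only [Nat.add_sub_cancel] at hst
        obtain ⟨s', hs', hx'⟩ := ih (by omega) x (ancF_mono hst hx)
        exact ⟨s', by omega, hx'⟩

lemma popped (G : GoodState P t sig q) {t₀ : ℕ} (ht₀ : 1 ≤ t₀) :
    ∀ t', t₀ ≤ t' → t' ≤ t →
      ∀ x ∈ ancF q (sig t'), (∃ s, s < t₀ ∧ sig s = x) → x ∈ ancF q (q (sig t₀)) := by
  intro t'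
  induction t' with
  | zero => intro h h' x hx hold; omega
  | succ t' ih =>
      intro h h' x hx hold
      rcases Nat.lt_or_ge t₀ (t'+1) with hlt | hge
      · rw [ancF_succ] at hx
        rcases Finset.mem_insert.1 hx with rfl | hx
        · obtain ⟨s, hs, hseq⟩ := hold
          have := G.inj s (t'+1) (by omega) (by omega) hseq
          omega
        · have hst := G.stack (t'+1) (by omega) h'
          simp only [Nat.add_sub_cancel] at hst
          exact ih (by omega) (by omega) x (ancF_mono hst hx) hold
      · have : t₀ = t' + 1 := by omega
        subst this
        rw [ancF_succ] at hx
        rcases Finset.mem_insert.1 hx with rfl | hx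
        · obtain ⟨s, hs, hseq⟩ := hold
          have := G.inj s (t'+1) (by omega) (by omega) hseq
          omega
        · exact hx

/-- visited vertices' ancestors are visited -/
lemma anc_vis (G : GoodState P t sig q) {s : ℕ} (hs : s ≤ t) {x : Fin (n+1)}
    {y : Fin (n+1)} (hy : y ∈ ancF q x) (hx : sig s = x) :
    ∃ s', s' ≤ t ∧ sig s' = y := by
  subst hx
  obtain ⟨s', hs', hy'⟩ := G.anc_before s hs y hy
  exact ⟨s', by omega, hy'⟩

end GoodState

end KW
namespace KW
open Finset

variable {n : ℕ}

/-! ### Section 5b: reconstruction from a parking function -/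

lemma sDeg_top {S : Finset (Fin (n+1))} {i : Fin (n+1)} (hi : i ∈ S) :
    PFG.sDeg (⊤ : SimpleGraph (Fin (n+1))) S i = (n+1) - S.card := by
  have hset : {j : Fin (n+1) | (⊤ : SimpleGraph (Fin (n+1))).Adj i j ∧ j ∉ S} =
      ↑(univ \ S) := by
    ext j
    simp only [SimpleGraph.top_adj, Set.mem_setOf_eq, Finset.coe_sdiff, Set.mem_diff,
      Finset.coe_univ, Set.mem_univ, true_and, Finset.mem_coe]
    constructor
    · rintro ⟨_, hj⟩; exact hj
    · intro hj; exact ⟨fun hh => hj (hh ▸ hi), hj⟩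
  rw [PFG.sDeg, hset, Set.ncard_coe_finset, Finset.card_sdiff_of_subset (Finset.subset_univ S),
    Finset.card_univ, Fintype.card_fin]

lemma park_step {P : Fin (n+1) → ℕ}
    (hP : PFG.IsParkingFunction (⊤ : SimpleGraph (Fin (n+1))) 0 P)
    {S : Finset (Fin (n+1))} (hne : S.Nonempty) (h0S : (0 : Fin (n+1)) ∉ S) :
    ∃ i ∈ S, P i + S.card ≤ n := by
  obtain ⟨i, hi, hlt⟩ := hP S hne h0S
  rw [sDeg_top hi] at hlt
  have h1 : 1 ≤ S.card := Finset.card_pos.2 hne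
  have h2 : S.card ≤ n + 1 := le_trans (Finset.card_le_card (Finset.subset_univ S))
    (by simp)
  exact ⟨i, hi, by omega⟩

open Classical in
noncomputable def rcand (P : Fin (n+1) → ℕ) (q : Fin (n+1) → Fin (n+1))
    (sig : ℕ → Fin (n+1)) (t : ℕ) : Finset (Fin (n+1) × Fin (n+1)) :=
  univ.filter (fun uw =>
    uw.1 ∈ ancF q (sig (t-1)) ∧ (∀ s, s < t → sig s ≠ uw.2) ∧
      P uw.2 + aval q uw.1 uw.2 = t - 1)

lemma mem_rcand {P : Fin (n+1) → ℕ} {q : Fin (n+1) → Fin (n+1)} {sig : ℕ → Fin (n+1)}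
    {t : ℕ} {uw : Fin (n+1) × Fin (n+1)} :
    uw ∈ rcand P q sig t ↔
      uw.1 ∈ ancF q (sig (t-1)) ∧ (∀ s, s < t → sig s ≠ uw.2) ∧
        P uw.2 + aval q uw.1 uw.2 = t - 1 := by
  simp [rcand]

noncomputable def rnext (P : Fin (n+1) → ℕ) (st : (ℕ → Fin (n+1)) × (Fin (n+1) → Fin (n+1)))
    (t : ℕ) : (ℕ → Fin (n+1)) × (Fin (n+1) → Fin (n+1)) :=
  let ch := pickMax (tkey st.2) (rcand P st.2 st.1 t) (0,0)
  (fun s => if s = t then ch.2 else st.1 s, Function.update st.2 ch.2 ch.1)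

noncomputable def rstate (P : Fin (n+1) → ℕ) : ℕ → ((ℕ → Fin (n+1)) × (Fin (n+1) → Fin (n+1)))
  | 0 => (fun _ => (0 : Fin (n+1)), fun x => x)
  | (t+1) => rnext P (rstate P t) (t+1)

lemma rcand_nonempty {P : Fin (n+1) → ℕ}
    (hP : PFG.IsParkingFunction (⊤ : SimpleGraph (Fin (n+1))) 0 P)
    {t : ℕ} (ht : t + 1 ≤ n) {sig : ℕ → Fin (n+1)} {q : Fin (n+1) → Fin (n+1)}
    (G : GoodState P t sig q) : (rcand P q sig (t+1)).Nonempty := by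
  classical
  -- an unvisited vertex with small parking value
  set vis := (Finset.range (t+1)).image sig with hvisdef
  have hviscard : vis.card = t + 1 := by
    rw [hvisdef, Finset.card_image_of_injOn, Finset.card_range]
    intro s hs s' hs' hss
    exact G.inj s s' (by simpa using Nat.lt_succ_iff.1 (Finset.mem_range.1 hs))
      (by simpa using Nat.lt_succ_iff.1 (Finset.mem_range.1 hs')) hss
  set S := univ \ vis with hSdef
  have hScard : S.card = n - t := by
    rw [hSdef, Finset.card_sdiff_of_subset (Finset.subset_univ vis), Finset.card_univ,
      Fintype.card_fin, hviscard]
    omega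
  have hSne : S.Nonempty := by
    rw [← Finset.card_pos, hScard]; omega
  have h0S : (0 : Fin (n+1)) ∉ S := by
    rw [hSdef]
    simp only [Finset.mem_sdiff, Finset.mem_univ, true_and, not_not]
    exact Finset.mem_image.2 ⟨0, by simp, G.sig0⟩
  obtain ⟨w, hwS, hwle⟩ := park_step hP hSne h0S
  have hwP : P w ≤ t := by rw [hScard] at hwle; omega
  have hwunvis : ∀ s, s ≤ t → sig s ≠ w := by
    intro s hs hsw
    rw [hSdef] at hwS
    simp only [Finset.mem_sdiff, Finset.mem_univ, true_and] at hwS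
    exact hwS (Finset.mem_image.2 ⟨s, Finset.mem_range.2 (by omega), hsw⟩)
  have hlow := G.lower w hwunvis
  -- intermediate value
  obtain ⟨u, hu, hueq⟩ := aval_ivt (w := w) G.q0 (sig t) (G.reach_vis t le_rfl) (t - P w) (by omega)
  refine ⟨(u, w), mem_rcand.2 ⟨by simpa using hu, ?_, ?_⟩⟩
  · intro s hs
    exact hwunvis s (by omega)
  · simp only
    rw [hueq]
    omega

end KW
namespace KW
open Finset

variable {n : ℕ} {P : Fin (n+1) → ℕ}

lemma GoodState_zero (P : Fin (n+1) → ℕ) :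
    GoodState P 0 (rstate P 0).1 (rstate P 0).2 := by
  refine ⟨rfl, rfl, ?_, ?_, ?_, ?_, ?_, ?_, ?_⟩
  · intro s s' hs hs' _; omega
  · intro x _; rfl
  · intro s hs hs'; omega
  · intro s hs hs'; omega
  · intro s s' hs hss' hs' _; omega
  · intro s hs hs'; omega
  · intro w _; exact Nat.zero_le _

lemma GoodState_step
    (hP : PFG.IsParkingFunction (⊤ : SimpleGraph (Fin (n+1))) 0 P)
    {t : ℕ} (ht : t + 1 ≤ n) {sig : ℕ → Fin (n+1)} {q : Fin (n+1) → Fin (n+1)}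
    (G : GoodState P t sig q) :
    GoodState P (t+1)
      (fun s => if s = t+1 then (pickMax (tkey q) (rcand P q sig (t+1))
          ((0,0) : Fin (n+1) × Fin (n+1))).2 else sig s)
      (Function.update q
        (pickMax (tkey q) (rcand P q sig (t+1)) ((0,0) : Fin (n+1) × Fin (n+1))).2
        (pickMax (tkey q) (rcand P q sig (t+1)) ((0,0) : Fin (n+1) × Fin (n+1))).1) := by
  classical
  have hne := rcand_nonempty hP ht G
  set ch := pickMax (tkey q) (rcand P q sig (t+1)) ((0,0) : Fin (n+1) × Fin (n+1)) with hchdef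
  have hmem : ch ∈ rcand P q sig (t+1) :=
    pickMax_mem (key := tkey q) (d := ((0,0) : Fin (n+1) × Fin (n+1))) hne
  have hmax : ∀ x ∈ rcand P q sig (t+1), tkey q x ≤ tkey q ch :=
    pickMax_max (key := tkey q) (d := ((0,0) : Fin (n+1) × Fin (n+1))) hne
  obtain ⟨hchain, hvnew0, hcons⟩ := mem_rcand.1 hmem
  set u := ch.1 with hudef
  set v := ch.2 with hvdef
  set sig' : ℕ → Fin (n+1) := fun s => if s = t+1 then v else sig s with hsig'def
  set q' : Fin (n+1) → Fin (n+1) := Function.update q v u with hq'def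
  have hsig'old : ∀ s, s ≤ t → sig' s = sig s := by
    intro s hs; rw [hsig'def]; simp only [if_neg (by omega : ¬ s = t+1)]
  have hsig'new : sig' (t+1) = v := by rw [hsig'def]; simp
  have hvnew : ∀ s, s ≤ t → sig s ≠ v := fun s hs => hvnew0 s (by omega)
  have hv0 : v ≠ 0 := by
    intro hh
    exact hvnew 0 (Nat.zero_le t) (G.sig0.trans hh.symm)
  have hvanc : ∀ s, s ≤ t → v ∉ ancF q (sig s) := by
    intro s hs hmem'
    obtain ⟨s', hs', he⟩ := G.anc_before s hs _ hmem'
    exact hvnew s' (le_trans hs' hs) he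
  have hreach_t : reach q (sig t) := G.reach_vis t le_rfl
  have hreach_u : reach q u := reach_of_mem_ancF G.q0 hreach_t hchain
  obtain ⟨s₂, hs₂le, hs₂eq⟩ := G.anc_before t le_rfl u hchain
  have hq'old : ∀ x, x ≠ v → q' x = q x := by
    intro x hx; rw [hq'def]; exact Function.update_of_ne hx _ _
  have hq'v : q' v = u := by rw [hq'def]; exact Function.update_self _ _ _
  have hancF_old : ∀ s, s ≤ t → ancF q' (sig s) = ancF q (sig s) := by
    intro s hs; rw [hq'def]; exact ancF_update (hvanc s hs)
  have hancF_u : ancF q' u = ancF q u := by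
    rw [← hs₂eq]; exact hancF_old s₂ hs₂le
  have hvu : v ∉ ancF q u := by rw [← hs₂eq]; exact hvanc s₂ hs₂le
  have hancF_v : ancF q' v = insert v (ancF q u) := by
    rw [ancF_succ (v := v), hq'v, hancF_u]
  have haval_v : ∀ w : Fin (n+1), aval q' v w = aval q u w + (if w < v then 1 else 0) := by
    intro w
    rw [aval, hancF_v, Finset.filter_insert]
    split
    · rw [Finset.card_insert_of_notMem (fun hh => hvu (Finset.mem_of_mem_filter _ hh))]
      rfl
    · rfl
  have haval_vis : ∀ x, (∃ s, s ≤ t ∧ sig s = x) → ∀ w, aval q' x w = aval q x w := by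
    rintro x ⟨s, hs, rfl⟩ w
    rw [aval, aval, hancF_old s hs]
  -- sibling helper : every previously visited child of u is > v
  have hsibv : ∀ s, 1 ≤ s → s ≤ t → q (sig s) = u → v < sig s := by
    intro s hs1 hs hqs
    rcases Classical.em (u = sig t) with htop | hnotop
    · -- impossible : u = sig t has no earlier children
      exfalso
      obtain ⟨s'', hs'', he''⟩ := G.parentEarlier s hs1 hs
      rw [hqs, htop] at he''
      have := G.inj t s'' le_rfl (by omega) he''
      omega
    · obtain ⟨cst, hqcst, hcstchain, hcstnot⟩ :=
        exists_chain_child G.q0 hreach_t hchain hnotop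
      obtain ⟨r, hrle, hreq⟩ := G.anc_before t le_rfl cst hcstchain
      have hc0 : cst ≠ 0 := by
        intro hh
        rw [hh] at hcstnot
        exact hcstnot (zero_mem_ancF hreach_u)
      have hr1 : 1 ≤ r := by
        rcases Nat.eq_zero_or_pos r with rfl | h
        · exfalso; apply hc0; rw [← hreq, G.sig0]
        · exact h
      -- every visited child of u has position ≤ r
      have hposle : s ≤ r := by
        by_contra hc
        push_neg at hc
        have hpop := G.popped (t₀ := s) hs1 t hs le_rfl cst hcstchain ⟨r, by omega, hreq⟩
        rw [hqs] at hpop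
        exact hcstnot hpop
      -- so cst is minimal among children of u
      have hcstle : cst ≤ sig s := by
        rcases Nat.lt_or_ge s r with h | h
        · have := G.sib s r hs1 h hrle (by rw [hqs, hreq, hqcst])
          rw [hreq] at this
          exact le_of_lt this
        · have : s = r := by omega
          rw [← hreq, ← this]
      -- v < cst by maximality
      have hvcst : v < cst := by
        by_contra hc
        push_neg at hc
        have hcstv : cst ≠ v := by
          intro hh
          exact hvnew r hrle (by rw [hreq, hh])
        have hlt : cst < v := lt_of_le_of_ne hc hcstv
        have havalcst : aval q cst v = aval q u v := by
          rw [aval, ancF_succ (v := cst), hqcst, Finset.filter_insert,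
            if_neg (by exact fun hh => absurd hh (not_lt.2 (le_of_lt hlt)))]
          rfl
        have hcand : (cst, v) ∈ rcand P q sig (t+1) :=
          mem_rcand.2 ⟨hcstchain, fun s' hs' => hvnew0 s' hs', by
            show P v + aval q cst v = t + 1 - 1
            rw [havalcst]
            exact hcons⟩
        have hkey := hmax _ hcand
        have hdep : dep q u < dep q cst := by
          apply dep_lt G.q0 (reach_of_mem_ancF G.q0 hreach_t hcstchain)
          · rw [← hqcst]; exact parent_mem_ancF
          · intro hh
            rw [← hh] at hcstnot
            exact hcstnot self_mem_ancF
        exact absurd hkey (not_le.2 (tkey_lt_of_dep_lt hdep))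
      exact lt_of_lt_of_le hvcst hcstle
  refine ⟨?_, ?_, ?_, ?_, ?_, ?_, ?_, ?_, ?_⟩
  · -- sig0
    show sig' 0 = 0
    rw [hsig'old 0 (Nat.zero_le t)]; exact G.sig0
  · -- q0
    show q' 0 = 0
    rw [hq'old 0 (Ne.symm hv0)]; exact G.q0
  · -- inj
    show ∀ s s', s ≤ t+1 → s' ≤ t+1 → sig' s = sig' s' → s = s'
    intro s s' hs hs' hss
    rcases Nat.lt_or_ge s (t+1) with h | h <;> rcases Nat.lt_or_ge s' (t+1) with h' | h'
    · rw [hsig'old s (by omega), hsig'old s' (by omega)] at hss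
      exact G.inj s s' (by omega) (by omega) hss
    · exfalso
      rw [hsig'old s (by omega), show s' = t+1 by omega, hsig'new] at hss
      exact hvnew s (by omega) hss
    · exfalso
      rw [hsig'old s' (by omega), show s = t+1 by omega, hsig'new] at hss
      exact hvnew s' (by omega) hss.symm
    · omega
  · -- qjunk
    show ∀ x, (∀ s, s ≤ t+1 → sig' s ≠ x) → q' x = x
    intro x hx
    have hxv : x ≠ v := by
      intro hh
      exact hx (t+1) le_rfl (by rw [hsig'new, hh])
    rw [hq'old x hxv]
    apply G.qjunk
    intro s hs
    have := hx s (by omega)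
    rwa [hsig'old s hs] at this
  · -- parentEarlier
    show ∀ s, 1 ≤ s → s ≤ t+1 → ∃ s', s' < s ∧ q' (sig' s) = sig' s'
    intro s hs1 hs
    rcases Nat.lt_or_ge s (t+1) with h | h
    · obtain ⟨s', hs', he⟩ := G.parentEarlier s hs1 (by omega)
      refine ⟨s', hs', ?_⟩
      rw [hsig'old s (by omega), hsig'old s' (by omega), hq'old _ (hvnew s (by omega))]
      exact he
    · have hseq : s = t+1 := by omega
      subst hseq
      refine ⟨s₂, by omega, ?_⟩
      rw [hsig'new, hq'v, hsig'old s₂ hs₂le]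
      exact hs₂eq.symm
  · -- stack
    show ∀ s, 1 ≤ s → s ≤ t+1 → q' (sig' s) ∈ ancF q' (sig' (s-1))
    intro s hs1 hs
    rcases Nat.lt_or_ge s (t+1) with h | h
    · rw [hsig'old s (by omega), hsig'old (s-1) (by omega),
        hq'old _ (hvnew s (by omega)), hancF_old (s-1) (by omega)]
      exact G.stack s hs1 (by omega)
    · have hseq : s = t+1 := by omega
      subst hseq
      rw [hsig'new, hq'v]
      simp only [Nat.add_sub_cancel]
      rw [hsig'old t le_rfl, hancF_old t le_rfl]
      exact hchain
  · -- sib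
    show ∀ s s', 1 ≤ s → s < s' → s' ≤ t+1 → q' (sig' s) = q' (sig' s') → sig' s' < sig' s
    intro s s' hs1 hss' hs' hqq
    rcases Nat.lt_or_ge s' (t+1) with h | h
    · rw [hsig'old s (by omega), hsig'old s' (by omega),
        hq'old _ (hvnew s (by omega)), hq'old _ (hvnew s' (by omega))] at hqq
      rw [hsig'old s (by omega), hsig'old s' (by omega)]
      exact G.sib s s' hs1 hss' (by omega) hqq
    · have hseq : s' = t+1 := by omega
      subst hseq
      rw [hsig'old s (by omega), hsig'new, hq'old _ (hvnew s (by omega)), hq'v] at hqq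
      rw [hsig'old s (by omega), hsig'new]
      exact hsibv s hs1 (by omega) hqq
  · -- consist
    show ∀ s, 1 ≤ s → s ≤ t+1 → P (sig' s) + aval q' (q' (sig' s)) (sig' s) = s - 1
    intro s hs1 hs
    rcases Nat.lt_or_ge s (t+1) with h | h
    · rw [hsig'old s (by omega), hq'old _ (hvnew s (by omega))]
      obtain ⟨s'', hs'', he''⟩ := G.parentEarlier s hs1 (by omega)
      rw [he'', haval_vis _ ⟨s'', by omega, rfl⟩, ← he'']
      exact G.consist s hs1 (by omega)
    · have hseq : s = t+1 := by omega
      subst hseq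
      rw [hsig'new, hq'v, ← hs₂eq, haval_vis _ ⟨s₂, hs₂le, rfl⟩, hs₂eq]
      exact hcons
  · -- lower
    show ∀ w, (∀ s, s ≤ t+1 → sig' s ≠ w) → P w + aval q' (sig' (t+1)) w ≥ t+1
    intro w hw
    have hwv : w ≠ v := by
      intro hh
      exact hw (t+1) le_rfl (by rw [hsig'new, hh])
    have hwold : ∀ s, s ≤ t → sig s ≠ w := by
      intro s hs
      have := hw s (by omega)
      rwa [hsig'old s hs] at this
    rw [hsig'new, haval_v]
    by_contra hcon
    push_neg at hcon
    have hlow := G.lower w hwold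
    have hPw : P w ≤ t := by
      split at hcon <;> omega
    have hkle : t - P w ≤ aval q (sig t) w := by omega
    obtain ⟨x, hx, hxval⟩ := aval_ivt (w := w) G.q0 (sig t) hreach_t (t - P w) hkle
    have hxcand : (x, w) ∈ rcand P q sig (t+1) :=
      mem_rcand.2 ⟨hx, fun s' hs' => hwold s' (by omega), by
        show P w + aval q x w = t + 1 - 1
        rw [hxval]
        omega⟩
    have hkeyx := hmax _ hxcand
    rcases Nat.lt_or_ge (aval q u w) (t - P w) with hcase | hcase
    · -- x is strictly deeper than u
      have hxnotu : x ∉ ancF q u := by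
        intro hh
        have := aval_mono (w := w) hh
        omega
      have hux : u ∈ ancF q x := by
        rcases ancF_total hx hchain with h | h
        · exact absurd h hxnotu
        · exact h
      have hdep : dep q u < dep q x := by
        apply dep_lt G.q0 (reach_of_mem_ancF G.q0 hreach_t hx) hux
        intro hh
        rw [hh] at hxnotu
        exact hxnotu self_mem_ancF
      exact absurd hkeyx (not_le.2 (tkey_lt_of_dep_lt hdep))
    · -- aval q u w = t - P w  and  ¬ w < v
      have hite : ¬ w < v := by
        split at hcon
        · omega
        · assumption
      have haveq : aval q u w = t - P w := by
        split at hcon <;> omega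
      have hucand : (u, w) ∈ rcand P q sig (t+1) :=
        mem_rcand.2 ⟨hchain, fun s' hs' => hwold s' (by omega), by
          show P w + aval q u w = t + 1 - 1
          rw [haveq]
          omega⟩
      have hkeyu : dep q u * (n+2) + w.val ≤ dep q u * (n+2) + v.val := by
        have := hmax _ hucand
        simpa [tkey, hudef, hvdef] using this
      have hwlev : w.val ≤ v.val := by omega
      have hvw : v < w := lt_of_le_of_ne (not_lt.1 hite) (Ne.symm hwv)
      rw [Fin.lt_def] at hvw
      omega

lemma GoodState_all
    (hP : PFG.IsParkingFunction (⊤ : SimpleGraph (Fin (n+1))) 0 P) :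
    ∀ t, t ≤ n → GoodState P t (rstate P t).1 (rstate P t).2 := by
  intro t
  induction t with
  | zero => intro _; exact GoodState_zero P
  | succ t ih =>
      intro ht
      exact GoodState_step hP ht (ih (by omega))

end KW
namespace KW
open Finset

variable {n : ℕ} {p : Fin (n+1) → Fin (n+1)}

/-! ### Section 6: counting and assembly -/

lemma sig_surj_of_inj {sig : ℕ → Fin (n+1)}
    (hinj : ∀ s s', s ≤ n → s' ≤ n → sig s = sig s' → s = s') :
    ∀ v, ∃ t, t ≤ n ∧ sig t = v := by
  intro v
  have hinj' : Function.Injective (fun i : Fin (n+1) => sig i.val) := by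
    intro i j hij
    exact Fin.ext (hinj i.val j.val (Nat.lt_succ_iff.1 i.isLt) (Nat.lt_succ_iff.1 j.isLt) hij)
  obtain ⟨i, hi⟩ := Finite.surjective_of_injective hinj' v
  exact ⟨i.val, Nat.lt_succ_iff.1 i.isLt, hi⟩

lemma mem_ancF_parent_iff {u v : Fin (n+1)} :
    u ∈ ancF p (p v) ↔ PFG.IsAncestor p u v := by
  rw [mem_ancF, PFG.IsAncestor]
  constructor
  · rintro ⟨k, hk⟩
    exact ⟨k+1, Nat.succ_pos k, by rw [Function.iterate_succ_apply]; exact hk⟩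
  · rintro ⟨k, hk, hke⟩
    refine ⟨k-1, ?_⟩
    have hk' : k = k - 1 + 1 := by omega
    rw [hk', Function.iterate_succ_apply] at hke
    exact hke

lemma invNum_eq_sum (p : Fin (n+1) → Fin (n+1)) :
    PFG.invNum p = ∑ v ∈ univ, invAt p v := by
  classical
  rw [PFG.invNum]
  have h1 : {uw : Fin (n+1) × Fin (n+1) | PFG.IsInversion p uw.1 uw.2}.ncard =
      (univ.filter (fun uw : Fin (n+1) × Fin (n+1) => PFG.IsInversion p uw.1 uw.2)).card := by
    rw [Set.ncard_eq_toFinset_card']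
    congr 1
    ext uw
    simp
  rw [h1]
  rw [Finset.card_eq_sum_card_fiberwise
    (f := Prod.snd) (t := univ) (fun x _ => Finset.mem_univ _)]
  apply Finset.sum_congr rfl
  intro v _
  have h2 : (univ.filter (fun uw : Fin (n+1) × Fin (n+1) => PFG.IsInversion p uw.1 uw.2)).filter
      (fun uw => uw.2 = v) = ((ancF p (p v)).filter (fun u => v < u)).image (fun u => (u, v)) := by
    ext uw
    simp only [Finset.mem_filter, Finset.mem_univ, true_and, Finset.mem_image]
    constructor
    · rintro ⟨hinv, rfl⟩
      exact ⟨uw.1, ⟨mem_ancF_parent_iff.2 hinv.1, hinv.2⟩, rfl⟩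
    · rintro ⟨u, hu, rfl⟩
      exact ⟨⟨mem_ancF_parent_iff.1 hu.1, hu.2⟩, rfl⟩
  rw [h2, Finset.card_image_of_injective _
    (fun a b hab => by simpa using congrArg Prod.fst hab)]
  rfl

lemma sum_Icc_pred (n : ℕ) : ∑ t ∈ Finset.Icc 1 n, (t-1) = n.choose 2 := by
  have h1 : ∑ t ∈ Finset.Icc 1 n, (t-1) = ∑ i ∈ Finset.range n, i := by
    apply Finset.sum_nbij' (i := fun t => t - 1) (j := fun i => i + 1)
    · intro a ha
      simp only [Finset.mem_Icc] at ha
      simp only [Finset.mem_range]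
      omega
    · intro a ha
      simp only [Finset.mem_range] at ha
      simp only [Finset.mem_Icc]
      omega
    · intro a ha
      simp only [Finset.mem_Icc] at ha
      omega
    · intro a ha
      omega
    · intro a ha
      rfl
  have h2 := Finset.sum_range_id_mul_two n
  have h3 : n.choose 2 = n * (n-1) / 2 := Nat.choose_two_right n
  omega

/-- degree + inversion count is the circuit rank. -/
lemma deg_phi_add_inv (h0 : p 0 = 0) (hr : ∀ v, reach p v) :
    PFG.degPF 0 (phi p h0 hr) + PFG.invNum p = n.choose 2 := by
  classical
  set O := ord p h0 hr with hO
  have hinv0 : invAt p 0 = 0 := by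
    rw [invAt, h0, aval_zero h0]
  have hsum : PFG.invNum p = ∑ v ∈ univ.erase 0, invAt p v := by
    rw [invNum_eq_sum, ← Finset.sum_erase_add _ _ (Finset.mem_univ (0 : Fin (n+1))), hinv0,
      Nat.add_zero]
  rw [PFG.degPF, hsum, ← Finset.sum_add_distrib]
  have hmain : ∑ v ∈ univ.erase 0, (phi p h0 hr v + invAt p v) =
      ∑ t ∈ Finset.Icc 1 n, (t-1) := by
    apply Finset.sum_nbij' (i := fun v => O.pos v) (j := fun t => O.sig t)
    · intro v hv
      simp only [Finset.mem_erase, Finset.mem_univ, and_true] at hv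
      simp only [Finset.mem_Icc]
      refine ⟨?_, O.pos_le v⟩
      rcases Nat.eq_zero_or_pos (O.pos v) with h | h
      · exfalso
        apply hv
        have := O.sig_pos v
        rw [h, O.sig0] at this
        exact this.symm
      · omega
    · intro t ht
      simp only [Finset.mem_Icc] at ht
      simp only [Finset.mem_erase, Finset.mem_univ, and_true]
      exact O.sig_ne_zero ht.1 ht.2
    · intro v hv
      exact O.sig_pos v
    · intro t ht
      simp only [Finset.mem_Icc] at ht
      exact O.pos_sig ht.2
    · intro v hv
      simp only [Finset.mem_erase, Finset.mem_univ, and_true] at hv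
      have h1 : 1 ≤ O.pos v := by
        rcases Nat.eq_zero_or_pos (O.pos v) with h | h
        · exfalso
          apply hv
          have := O.sig_pos v
          rw [h, O.sig0] at this
          exact this.symm
        · omega
      have := phi_key h0 hr h1 (O.pos_le v)
      rw [← hO, O.sig_pos v] at this
      omega
  rw [hmain, sum_Icc_pred]

/-- Φ is a parking function. -/
lemma phi_parking (h0 : p 0 = 0) (hr : ∀ v, reach p v) :
    PFG.IsParkingFunction (⊤ : SimpleGraph (Fin (n+1))) 0 (phi p h0 hr) := by
  classical
  intro S hSne hS0
  set O := ord p h0 hr with hO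
  set TS := S.image O.pos with hTSdef
  have hTSne : TS.Nonempty := hSne.image _
  set t₀ := TS.min' hTSne with ht₀def
  obtain ⟨v₀, hv₀S, hv₀t⟩ := Finset.mem_image.1 (TS.min'_mem hTSne)
  rw [← ht₀def] at hv₀t
  have ht₀le : ∀ v ∈ S, t₀ ≤ O.pos v := fun v hv =>
    TS.min'_le _ (Finset.mem_image_of_mem _ hv)
  have ht₀1 : 1 ≤ t₀ := by
    rcases Nat.eq_zero_or_pos t₀ with h | h
    · exfalso
      apply hS0
      rw [h] at hv₀t
      have hthis := O.sig_pos v₀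
      rw [hv₀t, O.sig0] at hthis
      rw [hthis]
      exact hv₀S
    · exact h
  have ht₀n : t₀ ≤ n := by rw [← hv₀t]; exact O.pos_le v₀
  -- early positions are disjoint from S
  have hdisj : ∀ s, s < t₀ → O.sig s ∉ S := by
    intro s hs hmem
    have := ht₀le _ hmem
    rw [O.pos_sig (by omega)] at this
    omega
  have hcard : S.card + t₀ ≤ n + 1 := by
    have hsub : (Finset.range t₀).image O.sig ⊆ univ \ S := by
      intro x hx
      obtain ⟨s, hs, rfl⟩ := Finset.mem_image.1 hx
      simp only [Finset.mem_sdiff, Finset.mem_univ, true_and]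
      exact hdisj s (Finset.mem_range.1 hs)
    have himgcard : ((Finset.range t₀).image O.sig).card = t₀ := by
      rw [Finset.card_image_of_injOn, Finset.card_range]
      intro s hs s' hs' hss
      have h1 : s < t₀ := Finset.mem_range.1 (by simpa using hs)
      have h2 : s' < t₀ := Finset.mem_range.1 (by simpa using hs')
      exact O.inj (by omega) (by omega) hss
    have := Finset.card_le_card hsub
    rw [himgcard, Finset.card_sdiff_of_subset (Finset.subset_univ S), Finset.card_univ,
      Fintype.card_fin] at this
    have hSle : S.card ≤ n + 1 :=
      le_trans (Finset.card_le_card (Finset.subset_univ S)) (by simp)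
    omega
  refine ⟨v₀, hv₀S, ?_⟩
  rw [sDeg_top hv₀S]
  have hphile : phi p h0 hr v₀ ≤ t₀ - 1 := by
    rw [phi, ← hO, hv₀t]
    omega
  omega

/-- surjectivity : every parking function with value 0 at the root comes from a tree. -/
lemma phi_surj {P : Fin (n+1) → ℕ} (hP0 : P 0 = 0)
    (hP : PFG.IsParkingFunction (⊤ : SimpleGraph (Fin (n+1))) 0 P) :
    ∃ (q : Fin (n+1) → Fin (n+1)) (h0 : q 0 = 0) (hr : ∀ v, reach q v),
      (∀ v, v ≠ 0 → q v ≠ v) ∧ phi q h0 hr = P := by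
  classical
  set sig := (rstate P n).1 with hsigdef
  set q := (rstate P n).2 with hqdef
  have G : GoodState P n sig q := GoodState_all hP n le_rfl
  have hsurj := sig_surj_of_inj G.inj
  have h0 : q 0 = 0 := G.q0
  have hr : ∀ v, reach q v := by
    intro v
    obtain ⟨t, ht, rfl⟩ := hsurj v
    exact G.reach_vis t ht
  have hnoself : ∀ v, v ≠ 0 → q v ≠ v := by
    intro v hv hqv
    obtain ⟨t, ht, rfl⟩ := hsurj v
    have ht1 : 1 ≤ t := by
      rcases Nat.eq_zero_or_pos t with rfl | h
      · exact absurd G.sig0 hv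
      · exact h
    obtain ⟨s', hs', he⟩ := G.parentEarlier t ht1 ht
    rw [hqv] at he
    have := G.inj s' t (by omega) ht he.symm
    omega
  refine ⟨q, h0, hr, hnoself, ?_⟩
  funext v
  obtain ⟨t, ht, rfl⟩ := hsurj v
  have huniq : ∀ s, s ≤ n → (ord q h0 hr).sig s = sig s := by
    intro s hs
    exact vord_unique h0 hr (ord q h0 hr)
      ⟨sig, G.sig0, fun s t hs ht hst => G.inj s t hs ht hst, G.stack, G.sib⟩ s hs
  rcases Nat.eq_zero_or_pos t with rfl | ht1
  · rw [G.sig0, phi_zero h0 hr, hP0]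
  · have hkey := phi_key h0 hr ht1 ht
    rw [huniq t ht] at hkey
    have hcons := G.consist t ht1 ht
    have hinvle : invAt q (sig t) ≤ t - 1 := by
      have := (ord q h0 hr).invAt_le h0 hr ht1 ht
      rwa [huniq t ht] at this
    have hiv : invAt q (sig t) = aval q (q (sig t)) (sig t) := rfl
    omega

end KW
namespace KW
open Finset

variable {n : ℕ}

noncomputable def Phi (T : PFG.RootedSpanningTree (⊤ : SimpleGraph (Fin (n+1))) 0) :
    Fin (n+1) → ℕ :=
  phi T.parent T.parent_root (fun v => T.reaches_root v)

lemma tree_ext {T T' : PFG.RootedSpanningTree (⊤ : SimpleGraph (Fin (n+1))) 0}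
    (h : T.parent = T'.parent) : T = T' := by
  obtain ⟨p1, a1, b1, c1⟩ := T
  obtain ⟨p2, a2, b2, c2⟩ := T'
  simp only at h
  subst h
  rfl

end KW

/-- For the complete graph `K_{n+1}` rooted at `0`: for each `a`, the number
of spanning trees with exactly `a` inversions equals the number of parking
functions of degree `C(n,2) - a` (stated additively: `deg P + a = C(n,2)`). -/
theorem complete_trees_inversions_eq_parking_functions {n : ℕ} (hn : 1 ≤ n)
    (a : ℕ) :
    Set.ncard {T : PFG.RootedSpanningTree (⊤ : SimpleGraph (Fin (n+1))) 0 |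
        PFG.invNum T.parent = a} =
      Set.ncard {P : Fin (n+1) → ℕ |
        P 0 = 0 ∧ PFG.IsParkingFunction (⊤ : SimpleGraph (Fin (n+1))) 0 P ∧
        PFG.degPF 0 P + a = n.choose 2} := by
  classical
  have himg : {P : Fin (n+1) → ℕ |
      P 0 = 0 ∧ PFG.IsParkingFunction (⊤ : SimpleGraph (Fin (n+1))) 0 P ∧
      PFG.degPF 0 P + a = n.choose 2} =
      KW.Phi '' {T : PFG.RootedSpanningTree (⊤ : SimpleGraph (Fin (n+1))) 0 |
        PFG.invNum T.parent = a} := by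
    ext P
    constructor
    · rintro ⟨hP0, hpark, hdeg⟩
      obtain ⟨q, h0, hr, hnoself, hphi⟩ := KW.phi_surj hP0 hpark
      refine ⟨⟨q, h0, fun v hv => ?_, hr⟩, ?_, ?_⟩
      · rw [SimpleGraph.top_adj]
        exact hnoself v hv
      · show PFG.invNum q = a
        have hdi := KW.deg_phi_add_inv h0 hr
        rw [hphi] at hdi
        omega
      · show KW.phi q _ _ = P
        exact hphi
    · rintro ⟨T, hT, rfl⟩
      have hdi := KW.deg_phi_add_inv T.parent_root (fun v => T.reaches_root v)
      simp only [Set.mem_setOf_eq] at hT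
      refine ⟨KW.phi_zero _ _, KW.phi_parking _ _, ?_⟩
      show PFG.degPF 0 (KW.Phi T) + a = n.choose 2
      rw [← hT]
      exact hdi
  rw [himg]
  apply (Set.ncard_image_of_injOn ?_).symm
  intro T hT T' hT' heq
  exact KW.tree_ext (KW.phi_inj _ _ _ _ heq)
end

section
/- Let G be a connected simple graph with root r, and let T be a spanning tree of G rooted at r. Running the 'tree to parking function' procedure (depth-first search of G guided by T, visiting neighbors in decreasing order, incrementing P(j) each time a non-tree edge (i,j) to an unvisited vertex j is encountered) produces a function P_T with deg P_T = (number of edges of G not in T) - (number of κ-inversions of T counted via the DFS order). In particular deg P_T ≤ g = |E| - |V| + 1. -/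
open Finset

namespace PFG

/-- One step of the tree-to-parking-function procedure: depth-first search of
`G` guided by the tree with parent map `par`, scanning unvisited neighbors in
decreasing order; tree edges `(i,j)` are followed recursively and each
non-tree edge `(i,j)` to an unvisited `j` increments `P j`.  The state is the
pair (visited vertices, current function `P`). -/
noncomputable def treeStep {n : ℕ} (G : SimpleGraph (Fin (n+1)))
    (par : Fin (n+1) → Fin (n+1)) :
    ℕ → Fin (n+1) → Finset (Fin (n+1)) × (Fin (n+1) → ℕ) →
      Finset (Fin (n+1)) × (Fin (n+1) → ℕ)
  | 0, _, st => st
  | (fuel+1), i, st =>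
      (nbrs G i).foldl
        (fun st j =>
          if j ∈ st.1 then st
          else if par j = i then treeStep G par fuel j (insert j st.1, st.2)
          else (st.1, Function.update st.2 j (st.2 j + 1))) st

/-- The function `P_T` produced by the tree-to-parking-function procedure. -/
noncomputable def treeToPF {n : ℕ} (G : SimpleGraph (Fin (n+1))) (r : Fin (n+1))
    (par : Fin (n+1) → Fin (n+1)) : Fin (n+1) → ℕ :=
  (treeStep G par (n+1) r ({r}, fun _ => 0)).2

end PFG

namespace PFG
namespace Aux

variable {n : ℕ}

section Tree

variable (par : Fin (n+1) → Fin (n+1)) (r : Fin (n+1))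

/-- weak ancestor: `a` is an iterated parent of `v` (possibly `a = v`). -/
def wanc (a v : Fin (n+1)) : Prop := ∃ k, par^[k] v = a

open Classical in
/-- depth of `v`: least `k` with `par^[k] v = r` (0 if none). -/
noncomputable def dep (v : Fin (n+1)) : ℕ :=
  if h : ∃ k, par^[k] v = r then Nat.find h else 0

/-- the child of `w` towards `v` (for `w` a strict weak ancestor of `v`). -/
noncomputable def ct (w v : Fin (n+1)) : Fin (n+1) :=
  par^[dep par r v - dep par r w - 1] v

variable {par r}

lemma iter_root (hroot : par r = r) (k : ℕ) : par^[k] r = r :=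
  Function.iterate_fixed hroot k

lemma dep_spec (hreach : ∀ v, ∃ k, par^[k] v = r) (v : Fin (n+1)) :
    par^[dep par r v] v = r := by
  rw [dep, dif_pos (hreach v)]; exact Nat.find_spec (hreach v)

lemma dep_min (hreach : ∀ v, ∃ k, par^[k] v = r) {v : Fin (n+1)} {k : ℕ}
    (h : par^[k] v = r) : dep par r v ≤ k := by
  rw [dep, dif_pos (hreach v)]; exact Nat.find_min' (hreach v) h

lemma dep_root (hreach : ∀ v, ∃ k, par^[k] v = r) : dep par r r = 0 :=
  Nat.le_zero.mp (dep_min hreach (by simp))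

lemma dep_pos (hreach : ∀ v, ∃ k, par^[k] v = r) {v : Fin (n+1)} (hv : v ≠ r) :
    0 < dep par r v := by
  rcases Nat.eq_zero_or_pos (dep par r v) with h | h
  · have := dep_spec hreach v; rw [h] at this; simp at this; exact absurd this hv
  · exact h

lemma dep_parent (hreach : ∀ v, ∃ k, par^[k] v = r) {v : Fin (n+1)} (hv : v ≠ r) :
    dep par r (par v) + 1 = dep par r v := by
  have hpos := dep_pos hreach hv
  have h1 : par^[dep par r v - 1] (par v) = r := by
    rw [← Function.iterate_succ_apply]
    rw [Nat.succ_eq_add_one, Nat.sub_add_cancel hpos]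
    exact dep_spec hreach v
  have h2 : dep par r (par v) ≤ dep par r v - 1 := dep_min hreach h1
  have h3 : dep par r v ≤ dep par r (par v) + 1 := by
    apply dep_min hreach
    rw [Function.iterate_succ_apply]
    exact dep_spec hreach (par v)
  omega

lemma dep_iterate (hreach : ∀ v, ∃ k, par^[k] v = r) (v : Fin (n+1)) :
    ∀ k, k ≤ dep par r v → dep par r (par^[k] v) = dep par r v - k := by
  intro k
  induction k with
  | zero => simp
  | succ k ih =>
    intro hk
    have hk' : k ≤ dep par r v := by omega
    have ihk := ih hk'
    have hne : par^[k] v ≠ r := by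
      intro h
      have := dep_min hreach h
      omega
    have hp := dep_parent hreach hne
    rw [Function.iterate_succ_apply']
    omega

lemma eq_root_of_cycle (hroot : par r = r) (hreach : ∀ v, ∃ k, par^[k] v = r)
    {v : Fin (n+1)} {k : ℕ} (hk : 0 < k) (h : par^[k] v = v) : v = r := by
  obtain ⟨m, hm⟩ := hreach v
  have hiter : ∀ t, par^[k * t] v = v := by
    intro t
    induction t with
    | zero => simp
    | succ t ih => rw [Nat.mul_succ, Function.iterate_add_apply, h, ih]
  have hbig : k * m ≥ m := Nat.le_mul_of_pos_left m hk
  calc v = par^[k * m] v := (hiter m).symm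
    _ = par^[k * m - m] (par^[m] v) := by rw [← Function.iterate_add_apply]; congr 1; omega
    _ = r := by rw [hm]; exact iter_root hroot _

lemma iterate_injective (hroot : par r = r) (hreach : ∀ v, ∃ k, par^[k] v = r)
    (v : Fin (n+1)) : ∀ s t, s ≤ dep par r v → t ≤ dep par r v →
      par^[s] v = par^[t] v → s = t := by
  have key : ∀ s t, s < t → t ≤ dep par r v → par^[s] v = par^[t] v → False := by
    intro s t hst ht h
    have hcyc : par^[t - s] (par^[s] v) = par^[s] v := by
      rw [← Function.iterate_add_apply]
      rw [show t - s + s = t by omega, h]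
    have := eq_root_of_cycle hroot hreach (by omega : 0 < t - s) hcyc
    have hd := dep_iterate hreach v s (by omega)
    rw [this, dep_root hreach] at hd
    omega
  intro s t hs ht h
  rcases lt_trichotomy s t with hlt | heq | hgt
  · exact (key s t hlt ht h).elim
  · exact heq
  · exact (key t s hgt hs h.symm).elim

lemma dep_le_n (hroot : par r = r) (hreach : ∀ v, ∃ k, par^[k] v = r)
    (v : Fin (n+1)) : dep par r v ≤ n := by
  by_contra h
  push_neg at h
  have hinj : Function.Injective (fun k : Fin (n+2) => par^[(k : ℕ)] v) := by
    intro s t hst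
    have := iterate_injective hroot hreach v s t (by omega) (by omega) hst
    exact Fin.ext this
  have := Fintype.card_le_of_injective _ hinj
  simp at this

lemma wanc_refl (v : Fin (n+1)) : wanc par v v := ⟨0, rfl⟩

lemma wanc_root (hreach : ∀ v, ∃ k, par^[k] v = r) (v : Fin (n+1)) : wanc par r v :=
  hreach v

lemma wanc_trans {a b c : Fin (n+1)} (h1 : wanc par a b) (h2 : wanc par b c) :
    wanc par a c := by
  obtain ⟨k, hk⟩ := h1; obtain ⟨m, hm⟩ := h2
  exact ⟨k + m, by rw [Function.iterate_add_apply, hm, hk]⟩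

lemma wanc_iff (hroot : par r = r) (hreach : ∀ v, ∃ k, par^[k] v = r)
    {a v : Fin (n+1)} : wanc par a v ↔
      dep par r a ≤ dep par r v ∧ par^[dep par r v - dep par r a] v = a := by
  constructor
  · rintro ⟨k, hk⟩
    rcases le_or_gt k (dep par r v) with hle | hlt
    · have := dep_iterate hreach v k hle
      rw [hk] at this
      constructor
      · omega
      · rw [show dep par r v - dep par r a = k by omega, hk]
    · have : par^[k] v = r := by
        have : par^[k - dep par r v] (par^[dep par r v] v) = r := by
          rw [dep_spec hreach]; exact iter_root hroot _
        rw [← Function.iterate_add_apply] at this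
        rw [show k - dep par r v + dep par r v = k by omega] at this
        exact this
      rw [hk] at this
      subst this
      rw [dep_root hreach]
      exact ⟨Nat.zero_le _, by rw [Nat.sub_zero]; exact dep_spec hreach v⟩
  · rintro ⟨_, h⟩
    exact ⟨_, h⟩

lemma wanc_dep_le (hroot : par r = r) (hreach : ∀ v, ∃ k, par^[k] v = r)
    {a v : Fin (n+1)} (h : wanc par a v) : dep par r a ≤ dep par r v :=
  ((wanc_iff hroot hreach).mp h).1

lemma wanc_antisymm (hroot : par r = r) (hreach : ∀ v, ∃ k, par^[k] v = r)
    {a v : Fin (n+1)} (h1 : wanc par a v) (h2 : wanc par v a) : a = v := by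
  have d1 := wanc_dep_le hroot hreach h1
  have d2 := wanc_dep_le hroot hreach h2
  have := ((wanc_iff hroot hreach).mp h1).2
  rw [show dep par r v - dep par r a = 0 by omega] at this
  simpa using this.symm

lemma wanc_dep_lt (hroot : par r = r) (hreach : ∀ v, ∃ k, par^[k] v = r)
    {a v : Fin (n+1)} (h : wanc par a v) (hne : a ≠ v) :
    dep par r a < dep par r v := by
  have d1 := wanc_dep_le hroot hreach h
  rcases lt_or_eq_of_le d1 with h' | h'
  · exact h'
  · exfalso
    have := ((wanc_iff hroot hreach).mp h).2
    rw [show dep par r v - dep par r a = 0 by omega] at this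
    simp at this
    exact hne this.symm

lemma wanc_parent {v : Fin (n+1)} : wanc par (par v) v := ⟨1, rfl⟩


lemma wanc_comparable {x y v : Fin (n+1)} (hx : wanc par x v) (hy : wanc par y v) :
    wanc par x y ∨ wanc par y x := by
  obtain ⟨s, hs⟩ := hx; obtain ⟨t, ht⟩ := hy
  rcases le_total s t with h | h
  · right
    refine ⟨t - s, ?_⟩
    rw [← hs, ← Function.iterate_add_apply, show t - s + s = t by omega, ht]
  · left
    refine ⟨s - t, ?_⟩
    rw [← ht, ← Function.iterate_add_apply, show s - t + t = s by omega, hs]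

lemma ct_prop (hroot : par r = r) (hreach : ∀ v, ∃ k, par^[k] v = r)
    {w v : Fin (n+1)} (h : wanc par w v) (hne : w ≠ v) :
    wanc par (ct par r w v) v ∧ par (ct par r w v) = w ∧
      dep par r (ct par r w v) = dep par r w + 1 := by
  have hlt := wanc_dep_lt hroot hreach h (by exact hne)
  have h2 := ((wanc_iff hroot hreach).mp h).2
  refine ⟨⟨_, rfl⟩, ?_, ?_⟩
  · have hs : par (par^[dep par r v - dep par r w - 1] v)
        = par^[dep par r v - dep par r w - 1 + 1] v :=
      (Function.iterate_succ_apply' par _ v).symm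
    rw [ct, hs, show dep par r v - dep par r w - 1 + 1 = dep par r v - dep par r w by omega]
    exact h2
  · rw [ct, dep_iterate hreach v _ (by omega)]; omega

lemma ct_wanc (hroot : par r = r) (hreach : ∀ v, ∃ k, par^[k] v = r)
    {w v : Fin (n+1)} (h : wanc par w v) (hne : w ≠ v) :
    wanc par (ct par r w v) v := (ct_prop hroot hreach h hne).1

lemma ct_parent (hroot : par r = r) (hreach : ∀ v, ∃ k, par^[k] v = r)
    {w v : Fin (n+1)} (h : wanc par w v) (hne : w ≠ v) :
    par (ct par r w v) = w := (ct_prop hroot hreach h hne).2.1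

lemma ct_dep (hroot : par r = r) (hreach : ∀ v, ∃ k, par^[k] v = r)
    {w v : Fin (n+1)} (h : wanc par w v) (hne : w ≠ v) :
    dep par r (ct par r w v) = dep par r w + 1 := (ct_prop hroot hreach h hne).2.2

lemma ct_ne (hroot : par r = r) (hreach : ∀ v, ∃ k, par^[k] v = r)
    {w v : Fin (n+1)} (h : wanc par w v) (hne : w ≠ v) :
    ct par r w v ≠ w := by
  intro heq
  have := ct_dep hroot hreach h hne
  rw [heq] at this
  omega

lemma child_ne_root (hroot : par r = r) {w c : Fin (n+1)} (hc : par c = w) (hcw : c ≠ w) :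
    c ≠ r := by
  intro h; subst h; rw [hroot] at hc; exact hcw hc

lemma child_dep (hroot : par r = r) (hreach : ∀ v, ∃ k, par^[k] v = r)
    {w c : Fin (n+1)} (hc : par c = w) (hcw : c ≠ w) :
    dep par r c = dep par r w + 1 := by
  have := dep_parent hreach (child_ne_root hroot hc hcw)
  rw [hc] at this
  omega

lemma ct_eq (hroot : par r = r) (hreach : ∀ v, ∃ k, par^[k] v = r)
    {w c v : Fin (n+1)} (hc : par c = w) (hcw : c ≠ w) (hcv : wanc par c v) :
    ct par r w v = c := by
  have hdc := child_dep hroot hreach hc hcw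
  have h2 := ((wanc_iff hroot hreach).mp hcv).2
  have h1 := ((wanc_iff hroot hreach).mp hcv).1
  rw [ct, show dep par r v - dep par r w - 1 = dep par r v - dep par r c by omega]
  exact h2

lemma sibling_disjoint (hroot : par r = r) (hreach : ∀ v, ∃ k, par^[k] v = r)
    {w c c' v : Fin (n+1)} (hc : par c = w) (hcw : c ≠ w) (hc' : par c' = w)
    (hcw' : c' ≠ w) (h1 : wanc par c v) (h2 : wanc par c' v) : c = c' := by
  rw [← ct_eq hroot hreach hc hcw h1, ← ct_eq hroot hreach hc' hcw' h2]

lemma not_wanc_child_parent (hroot : par r = r) (hreach : ∀ v, ∃ k, par^[k] v = r)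
    {w c : Fin (n+1)} (hc : par c = w) (hcw : c ≠ w) : ¬ wanc par c w := by
  intro h
  have := wanc_dep_le hroot hreach h
  have := child_dep hroot hreach hc hcw
  omega

open Classical in
/-- least common ancestor -/
noncomputable def lca (q : Fin (n+1) → Fin (n+1)) (a b : Fin (n+1)) : Fin (n+1) :=
  if h : ∃ k, wanc q (q^[k] a) b then q^[Nat.find h] a else a

lemma lca_ex (hreach : ∀ v, ∃ k, par^[k] v = r) (a b : Fin (n+1)) :
    ∃ k, wanc par (par^[k] a) b :=
  ⟨dep par r a, by rw [dep_spec hreach]; exact wanc_root hreach b⟩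

lemma lca_wanc_right (hreach : ∀ v, ∃ k, par^[k] v = r) (a b : Fin (n+1)) :
    wanc par (lca par a b) b := by
  classical
  rw [lca, dif_pos (lca_ex hreach a b)]
  exact Nat.find_spec (lca_ex hreach a b)

lemma lca_wanc_left (hreach : ∀ v, ∃ k, par^[k] v = r) (a b : Fin (n+1)) :
    wanc par (lca par a b) a := by
  classical
  rw [lca, dif_pos (lca_ex hreach a b)]
  exact ⟨_, rfl⟩

lemma lca_greatest (hreach : ∀ v, ∃ k, par^[k] v = r) {w a b : Fin (n+1)}
    (ha : wanc par w a) (hb : wanc par w b) : wanc par w (lca par a b) := by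
  classical
  have hex := lca_ex hreach a b
  rw [lca, dif_pos hex]
  obtain ⟨k, hk⟩ := ha
  have hK : Nat.find hex ≤ k := Nat.find_min' hex (by rw [hk]; exact hb)
  refine ⟨k - Nat.find hex, ?_⟩
  rw [← Function.iterate_add_apply, show k - Nat.find hex + Nat.find hex = k by omega, hk]

lemma lca_eq (hroot : par r = r) (hreach : ∀ v, ∃ k, par^[k] v = r) {a b x : Fin (n+1)}
    (hxa : wanc par x a) (hxb : wanc par x b)
    (hmax : ∀ w, wanc par w a → wanc par w b → wanc par w x) : lca par a b = x :=
  wanc_antisymm hroot hreach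
    (hmax _ (lca_wanc_left hreach a b) (lca_wanc_right hreach a b))
    (lca_greatest hreach hxa hxb)

lemma lca_comm (hroot : par r = r) (hreach : ∀ v, ∃ k, par^[k] v = r) (a b : Fin (n+1)) :
    lca par a b = lca par b a :=
  lca_eq hroot hreach (lca_wanc_right hreach b a) (lca_wanc_left hreach b a)
    (fun w hwa hwb => lca_greatest hreach hwb hwa)

lemma lca_of_wanc_left (hroot : par r = r) (hreach : ∀ v, ∃ k, par^[k] v = r)
    {a b : Fin (n+1)} (h : wanc par a b) : lca par a b = a :=
  lca_eq hroot hreach (wanc_refl a) h (fun _ hwa _ => hwa)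

lemma lca_of_wanc_right (hroot : par r = r) (hreach : ∀ v, ∃ k, par^[k] v = r)
    {a b : Fin (n+1)} (h : wanc par b a) : lca par a b = b :=
  lca_eq hroot hreach h (wanc_refl b) (fun _ _ hwb => hwb)

lemma lca_children (hroot : par r = r) (hreach : ∀ v, ∃ k, par^[k] v = r)
    {i a b : Fin (n+1)} (ha : wanc par i a) (hb : wanc par i b)
    (hai : a ≠ i) (hbi : b ≠ i) (hne : ct par r i a ≠ ct par r i b) :
    lca par a b = i := by
  apply lca_eq hroot hreach ha hb
  intro w hwa hwb
  rcases wanc_comparable hwa ha with h | h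
  · exact h
  · by_cases hwi : w = i
    · subst hwi; exact wanc_refl w
    · exfalso
      have hcw := ct_wanc hroot hreach h (Ne.symm hwi)
      have hcp := ct_parent hroot hreach h (Ne.symm hwi)
      have hcni := ct_ne hroot hreach h (Ne.symm hwi)
      have hca : wanc par (ct par r i w) a := wanc_trans hcw hwa
      have hcb : wanc par (ct par r i w) b := wanc_trans hcw hwb
      exact hne (by rw [ct_eq hroot hreach hcp hcni hca, ct_eq hroot hreach hcp hcni hcb])


/-- `a` would scan `j` strictly before `j` is entered in the guided DFS. -/
noncomputable def scanB (par : Fin (n+1) → Fin (n+1)) (r a j : Fin (n+1)) : Prop :=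
  (lca par a j = a ∧ a ≠ j ∧ ct par r a j < j) ∨
  (lca par a j ≠ a ∧ lca par a j ≠ j ∧
    ct par r (lca par a j) j < ct par r (lca par a j) a)

lemma wanc_root_eq (hroot : par r = r) {w : Fin (n+1)} (h : wanc par w r) : w = r := by
  obtain ⟨k, hk⟩ := h
  rw [iter_root hroot] at hk
  exact hk.symm

lemma scanB_not_root (hroot : par r = r) (hreach : ∀ v, ∃ k, par^[k] v = r)
    (a : Fin (n+1)) : ¬ scanB par r a r := by
  intro h
  have hl : lca par a r = r := wanc_root_eq hroot (lca_wanc_right hreach a r)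
  rcases h with ⟨h1, h2, _⟩ | ⟨_, h2, _⟩
  · rw [hl] at h1; exact h2 h1.symm
  · exact h2 hl

lemma scanB_not_of_wanc (hroot : par r = r) (hreach : ∀ v, ∃ k, par^[k] v = r)
    {a j : Fin (n+1)} (h : wanc par j a) : ¬ scanB par r a j := by
  intro hs
  have hl : lca par a j = j := lca_of_wanc_right hroot hreach h
  rcases hs with ⟨h1, h2, _⟩ | ⟨_, h2, _⟩
  · rw [hl] at h1; exact h2 h1.symm
  · exact h2 hl

lemma scanB_of_wanc (hroot : par r = r) (hreach : ∀ v, ∃ k, par^[k] v = r)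
    {a j : Fin (n+1)} (h : wanc par a j) (hne : a ≠ j) :
    scanB par r a j ↔ ct par r a j < j := by
  have hl : lca par a j = a := lca_of_wanc_left hroot hreach h
  constructor
  · rintro (⟨_, _, h3⟩ | ⟨h1, _, _⟩)
    · exact h3
    · exact absurd hl h1
  · intro h3
    exact Or.inl ⟨hl, hne, h3⟩

lemma scanB_sibling (hroot : par r = r) (hreach : ∀ v, ∃ k, par^[k] v = r)
    {i c c' a j : Fin (n+1)} (hc : par c = i) (hci : c ≠ i) (hc' : par c' = i)
    (hci' : c' ≠ i) (hcc : c ≠ c') (ha : wanc par c a) (hj : wanc par c' j) :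
    scanB par r a j ↔ c' < c := by
  have hia : wanc par i a := wanc_trans (hc ▸ wanc_parent) ha
  have hij : wanc par i j := wanc_trans (hc' ▸ wanc_parent) hj
  have hai : a ≠ i := by
    intro h; subst h; exact not_wanc_child_parent hroot hreach hc hci ha
  have hji : j ≠ i := by
    intro h; subst h; exact not_wanc_child_parent hroot hreach hc' hci' hj
  have hcta : ct par r i a = c := ct_eq hroot hreach hc hci ha
  have hctj : ct par r i j = c' := ct_eq hroot hreach hc' hci' hj
  have hl : lca par a j = i := lca_children hroot hreach hia hij hai hji
    (by rw [hcta, hctj]; exact hcc)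
  constructor
  · rintro (⟨h1, _, _⟩ | ⟨_, _, h3⟩)
    · rw [hl] at h1; exact absurd h1.symm hai
    · rw [hl, hcta, hctj] at h3; exact h3
  · intro hlt
    refine Or.inr ⟨?_, ?_, ?_⟩
    · rw [hl]; exact Ne.symm hai
    · rw [hl]; exact Ne.symm hji
    · rw [hl, hcta, hctj]; exact hlt

end Tree


section Count

open Classical

noncomputable def Dfin (par : Fin (n+1) → Fin (n+1)) (i : Fin (n+1)) : Finset (Fin (n+1)) :=
  univ.filter (fun v => wanc par i v)

lemma mem_Dfin {par : Fin (n+1) → Fin (n+1)} {i v : Fin (n+1)} :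
    v ∈ Dfin par i ↔ wanc par i v := by simp [Dfin]

noncomputable def Acard (G : SimpleGraph (Fin (n+1))) (par : Fin (n+1) → Fin (n+1))
    (i j : Fin (n+1)) : ℕ :=
  (univ.filter fun a => wanc par i a ∧ G.Adj a j).card

noncomputable def Bcard (G : SimpleGraph (Fin (n+1))) (par : Fin (n+1) → Fin (n+1))
    (r i j : Fin (n+1)) : ℕ :=
  (univ.filter fun a => wanc par i a ∧ G.Adj a j ∧ scanB par r a j).card

noncomputable def incF (G : SimpleGraph (Fin (n+1))) (par : Fin (n+1) → Fin (n+1))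
    (r i : Fin (n+1)) (S : Finset (Fin (n+1))) (j : Fin (n+1)) : ℕ :=
  if j ∈ S then 0 else if wanc par i j then Bcard G par r i j else Acard G par i j

noncomputable def cnt (G : SimpleGraph (Fin (n+1))) (par : Fin (n+1) → Fin (n+1))
    (r i : Fin (n+1)) (l : List (Fin (n+1))) (S : Finset (Fin (n+1)))
    (j : Fin (n+1)) : ℕ :=
  if j ∈ S then 0 else
  (univ.filter fun a => G.Adj a j ∧
    ((a = i ∧ j ∈ l ∧ (wanc par i j → ct par r i j < j)) ∨
     (∃ c, c ∈ l ∧ par c = i ∧ c ≠ i ∧ wanc par c a ∧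
        (wanc par i j → scanB par r a j)))).card

lemma mem_nbrs {G : SimpleGraph (Fin (n+1))} {i j : Fin (n+1)} :
    j ∈ nbrs G i ↔ G.Adj i j := by
  simp [nbrs]

lemma nbrs_sorted (G : SimpleGraph (Fin (n+1))) (i : Fin (n+1)) :
    (nbrs G i).Pairwise (· > ·) := by
  rw [nbrs]
  exact List.pairwise_reverse.mpr (by simpa using List.sortedLT_iff_pairwise.mp (Finset.sortedLT_sort _))

end Count

section MainLemmas

variable {G : SimpleGraph (Fin (n+1))} {par : Fin (n+1) → Fin (n+1)} {r : Fin (n+1)}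

lemma cnt_nil {i : Fin (n+1)} {S : Finset (Fin (n+1))} (j : Fin (n+1)) :
    cnt G par r i [] S j = 0 := by
  classical
  rw [cnt]
  split
  · rfl
  · convert Finset.card_empty
    apply Finset.filter_eq_empty_iff.mpr
    rintro a - ⟨-, ⟨-, h, -⟩ | ⟨c, h, -⟩⟩ <;> simp at h

lemma wanc_eq_of_dep (hroot : par r = r) (hreach : ∀ v, ∃ k, par^[k] v = r)
    {a b : Fin (n+1)} (h : wanc par a b) (hd : dep par r a = dep par r b) : a = b := by
  have h2 := ((wanc_iff hroot hreach).mp h).2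
  rw [show dep par r b - dep par r a = 0 by omega] at h2
  simpa using h2.symm

lemma cnt_cons_visited {i c : Fin (n+1)} {l : List (Fin (n+1))} {S : Finset (Fin (n+1))}
    (hc : c ∈ S) (hnc : par c ≠ i) (j : Fin (n+1)) :
    cnt G par r i (c :: l) S j = cnt G par r i l S j := by
  classical
  rw [cnt, cnt]
  by_cases hj : j ∈ S
  · rw [if_pos hj, if_pos hj]
  · rw [if_neg hj, if_neg hj]
    congr 1
    apply Finset.filter_congr
    intro a _
    have hjc : j ≠ c := fun h => hj (h ▸ hc)
    constructor
    · rintro ⟨hadj, ⟨ha, hjl, hx⟩ | ⟨c', hc', h2, h3, h4, h5⟩⟩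
      · refine ⟨hadj, Or.inl ⟨ha, ?_, hx⟩⟩
        rcases List.mem_cons.mp hjl with h' | h'
        · exact absurd h' hjc
        · exact h'
      · rcases List.mem_cons.mp hc' with h' | h'
        · subst h'; exact absurd h2 hnc
        · exact ⟨hadj, Or.inr ⟨c', h', h2, h3, h4, h5⟩⟩
    · rintro ⟨hadj, ⟨ha, hjl, hx⟩ | ⟨c', hc', h2, h3, h4, h5⟩⟩
      · exact ⟨hadj, Or.inl ⟨ha, List.mem_cons_of_mem _ hjl, hx⟩⟩
      · exact ⟨hadj, Or.inr ⟨c', List.mem_cons_of_mem _ hc', h2, h3, h4, h5⟩⟩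

lemma cnt_cons_nonchild (hroot : par r = r) (hreach : ∀ v, ∃ k, par^[k] v = r)
    {i c : Fin (n+1)} {l : List (Fin (n+1))} {S : Finset (Fin (n+1))}
    (hc : c ∉ S) (hnc : par c ≠ i) (hadjc : G.Adj i c)
    (hlt : ∀ x ∈ l, x < c)
    (h3c : wanc par i c → ct par r i c ∈ l) (j : Fin (n+1)) :
    cnt G par r i (c :: l) S j = (if j = c then 1 else 0) + cnt G par r i l S j := by
  classical
  by_cases hj : j ∈ S
  · have hjc : j ≠ c := fun h => hc (h ▸ hj)
    rw [cnt, cnt, if_pos hj, if_pos hj, if_neg hjc]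
  · by_cases hjc : j = c
    · subst hjc
      rw [cnt, cnt, if_neg hj, if_neg hj, if_pos rfl]
      have hckey : (univ.filter fun a => G.Adj a j ∧
          ((a = i ∧ j ∈ (j :: l) ∧ (wanc par i j → ct par r i j < j)) ∨
           (∃ c', c' ∈ (j :: l) ∧ par c' = i ∧ c' ≠ i ∧ wanc par c' a ∧
              (wanc par i j → scanB par r a j)))) =
          insert i (univ.filter fun a => G.Adj a j ∧
          ((a = i ∧ j ∈ l ∧ (wanc par i j → ct par r i j < j)) ∨
           (∃ c', c' ∈ l ∧ par c' = i ∧ c' ≠ i ∧ wanc par c' a ∧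
              (wanc par i j → scanB par r a j)))) := by
        ext a
        simp only [Finset.mem_insert, Finset.mem_filter, Finset.mem_univ, true_and]
        constructor
        · rintro ⟨hadj, ⟨ha, hjl, hx⟩ | ⟨c', hc', h2, h3, h4, h5⟩⟩
          · exact Or.inl ha
          · rcases List.mem_cons.mp hc' with h' | h'
            · subst h'; exact absurd h2 hnc
            · exact Or.inr ⟨hadj, Or.inr ⟨c', h', h2, h3, h4, h5⟩⟩
        · rintro (rfl | ⟨hadj, ⟨ha, hjl, hx⟩ | ⟨c', hc', h2, h3, h4, h5⟩⟩)
          · refine ⟨hadjc, Or.inl ⟨rfl, List.mem_cons_self, fun hw => ?_⟩⟩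
            exact hlt _ (h3c hw)
          · exact ⟨hadj, Or.inl ⟨ha, List.mem_cons_of_mem _ hjl, hx⟩⟩
          · exact ⟨hadj, Or.inr ⟨c', List.mem_cons_of_mem _ hc', h2, h3, h4, h5⟩⟩
      rw [hckey, Finset.card_insert_of_notMem, Nat.add_comm]
      intro hmem
      rw [Finset.mem_filter] at hmem
      rcases hmem.2.2 with ⟨-, hjl, -⟩ | ⟨c', hc', h2, h3, h4, -⟩
      · exact absurd rfl (ne_of_lt (hlt _ hjl))
      · exact not_wanc_child_parent hroot hreach h2 h3 h4
    · rw [cnt, cnt, if_neg hj, if_neg hj, if_neg hjc]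
      rw [Nat.zero_add]
      congr 1
      apply Finset.filter_congr
      intro a _
      constructor
      · rintro ⟨hadj, ⟨ha, hjl, hx⟩ | ⟨c', hc', h2, h3, h4, h5⟩⟩
        · refine ⟨hadj, Or.inl ⟨ha, ?_, hx⟩⟩
          rcases List.mem_cons.mp hjl with h' | h'
          · exact absurd h' hjc
          · exact h'
        · rcases List.mem_cons.mp hc' with h' | h'
          · subst h'; exact absurd h2 hnc
          · exact ⟨hadj, Or.inr ⟨c', h', h2, h3, h4, h5⟩⟩
      · rintro ⟨hadj, ⟨ha, hjl, hx⟩ | ⟨c', hc', h2, h3, h4, h5⟩⟩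
        · exact ⟨hadj, Or.inl ⟨ha, List.mem_cons_of_mem _ hjl, hx⟩⟩
        · exact ⟨hadj, Or.inr ⟨c', List.mem_cons_of_mem _ hc', h2, h3, h4, h5⟩⟩

lemma cnt_cons_child (hroot : par r = r) (hreach : ∀ v, ∃ k, par^[k] v = r)
    {i c : Fin (n+1)} {l : List (Fin (n+1))} {S : Finset (Fin (n+1))}
    (hc : c ∉ S) (hch : par c = i) (hci : c ≠ i) (hiS : i ∈ S)
    (hlt : ∀ x ∈ l, x < c)
    (h3 : ∀ v, wanc par i v → v ≠ i → v ∉ S → ct par r i v ∈ c :: l) (j : Fin (n+1)) :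
    cnt G par r i (c :: l) S j =
      incF G par r c (insert c S) j + cnt G par r i l (S ∪ Dfin par c) j := by
  classical
  have hwic : wanc par i c := hch ▸ wanc_parent
  by_cases hj : j ∈ S
  · rw [cnt, cnt, incF, if_pos hj, if_pos (Finset.mem_insert_of_mem hj),
      if_pos (Finset.mem_union_left _ hj)]
  · have hji : j ≠ i := fun h => hj (h ▸ hiS)
    by_cases hjc : j = c
    · subst hjc
      rw [cnt, cnt, incF, if_neg hj, if_pos (Finset.mem_insert_self _ _),
        if_pos (Finset.mem_union_right _ (mem_Dfin.mpr (wanc_refl j)))]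
      convert Finset.card_empty using 2
      apply Finset.filter_eq_empty_iff.mpr
      rintro a - ⟨hadj, ⟨rfl, hjl, hx⟩ | ⟨c', hc', h2, h3', h4, h5⟩⟩
      · have := hx hwic
        rw [ct_eq hroot hreach hch hci (wanc_refl j)] at this
        exact absurd this (lt_irrefl j)
      · rcases List.mem_cons.mp hc' with h' | h'
        · subst h'
          exact scanB_not_of_wanc hroot hreach h4 (h5 hwic)
        · have hcc : c' ≠ j := ne_of_lt (hlt _ h')
          have := (scanB_sibling hroot hreach h2 h3' hch hci hcc h4
            (wanc_refl j)).mp (h5 hwic)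
          exact absurd (lt_trans this (hlt _ h')) (lt_irrefl _)
    · by_cases hwcj : wanc par c j
      · -- j strictly inside the subtree of c
        have hjDc : j ∈ Dfin par c := mem_Dfin.mpr hwcj
        rw [cnt, cnt, incF, if_neg hj, if_pos (Finset.mem_union_right _ hjDc),
          if_neg (by simp [hjc, hj] : j ∉ insert c S), if_pos hwcj, Bcard]
        simp only [Nat.add_zero]
        congr 1
        apply Finset.filter_congr
        intro a _
        have hwij : wanc par i j := wanc_trans hwic hwcj
        constructor
        · rintro ⟨hadj, ⟨rfl, hjl, hx⟩ | ⟨c', hc', h2, h3', h4, h5⟩⟩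
          · exfalso
            have h1 := hx hwij
            rw [ct_eq hroot hreach hch hci hwcj] at h1
            rcases List.mem_cons.mp hjl with h' | h'
            · exact hjc h'
            · exact absurd (lt_trans h1 (hlt _ h')) (lt_irrefl _)
          · rcases List.mem_cons.mp hc' with h' | h'
            · subst h'
              exact ⟨h4, hadj, h5 hwij⟩
            · exfalso
              have hcc : c' ≠ c := ne_of_lt (hlt _ h')
              have := (scanB_sibling hroot hreach h2 h3' hch hci hcc h4 hwcj).mp
                (h5 hwij)
              exact absurd (lt_trans this (hlt _ h')) (lt_irrefl _)
        · rintro ⟨hwa, hadj, hs⟩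
          exact ⟨hadj, Or.inr ⟨c, List.mem_cons_self, hch, hci, hwa, fun _ => hs⟩⟩
      · -- j outside the subtree of c
        have hjU : j ∉ S ∪ Dfin par c := by
          simp only [Finset.mem_union, mem_Dfin]
          rintro (h | h)
          · exact hj h
          · exact hwcj h
        rw [cnt, cnt, incF, if_neg hj, if_neg hjU,
          if_neg (by simp [hjc, hj] : j ∉ insert c S), if_neg hwcj, Acard]
        have hsplit : (univ.filter fun a => G.Adj a j ∧
            ((a = i ∧ j ∈ (c :: l) ∧ (wanc par i j → ct par r i j < j)) ∨
             (∃ c', c' ∈ (c :: l) ∧ par c' = i ∧ c' ≠ i ∧ wanc par c' a ∧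
                (wanc par i j → scanB par r a j)))) =
            (univ.filter fun a => wanc par c a ∧ G.Adj a j) ∪
            (univ.filter fun a => G.Adj a j ∧
            ((a = i ∧ j ∈ l ∧ (wanc par i j → ct par r i j < j)) ∨
             (∃ c', c' ∈ l ∧ par c' = i ∧ c' ≠ i ∧ wanc par c' a ∧
                (wanc par i j → scanB par r a j)))) := by
          ext a
          simp only [Finset.mem_union, Finset.mem_filter, Finset.mem_univ, true_and]
          constructor
          · rintro ⟨hadj, ⟨rfl, hjl, hx⟩ | ⟨c', hc', h2, h3', h4, h5⟩⟩
            · refine Or.inr ⟨hadj, Or.inl ⟨rfl, ?_, hx⟩⟩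
              rcases List.mem_cons.mp hjl with h' | h'
              · exact absurd h' hjc
              · exact h'
            · rcases List.mem_cons.mp hc' with h' | h'
              · subst h'
                exact Or.inl ⟨h4, hadj⟩
              · exact Or.inr ⟨hadj, Or.inr ⟨c', h', h2, h3', h4, h5⟩⟩
          · rintro (⟨hwa, hadj⟩ | ⟨hadj, ⟨ha, hjl, hx⟩ | ⟨c', hc', h2, h3', h4, h5⟩⟩)
            · refine ⟨hadj, Or.inr ⟨c, List.mem_cons_self, hch, hci, hwa, ?_⟩⟩
              intro hwij
              have hc0w : wanc par (ct par r i j) j := ct_wanc hroot hreach hwij (Ne.symm hji)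
              have hc0p : par (ct par r i j) = i := ct_parent hroot hreach hwij (Ne.symm hji)
              have hc0i : ct par r i j ≠ i := ct_ne hroot hreach hwij (Ne.symm hji)
              have hc0c : ct par r i j ≠ c := by
                intro h; rw [h] at hc0w; exact hwcj hc0w
              have hc0l : ct par r i j ∈ l := by
                rcases List.mem_cons.mp (h3 j hwij hji hj) with h' | h'
                · exact absurd h' hc0c
                · exact h'
              exact (scanB_sibling hroot hreach hch hci hc0p hc0i
                (Ne.symm hc0c) hwa hc0w).mpr (hlt _ hc0l)
            · exact ⟨hadj, Or.inl ⟨ha, List.mem_cons_of_mem _ hjl, hx⟩⟩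
            · exact ⟨hadj, Or.inr ⟨c', List.mem_cons_of_mem _ hc', h2, h3', h4, h5⟩⟩
        rw [hsplit, Finset.card_union_of_disjoint]
        rw [Finset.disjoint_left]
        intro a ha ha'
        rw [Finset.mem_filter] at ha ha'
        rcases ha'.2.2 with ⟨rfl, -, -⟩ | ⟨c', hc', h2, h3', h4, -⟩
        · exact not_wanc_child_parent hroot hreach hch hci ha.2.1
        · have := sibling_disjoint hroot hreach hch hci h2 h3' ha.2.1 h4
          exact (ne_of_lt (hlt _ hc')) this.symm

lemma cnt_nbrs (hroot : par r = r) (hreach : ∀ v, ∃ k, par^[k] v = r)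
    (hadjpar : ∀ v, v ≠ r → G.Adj (par v) v)
    {i : Fin (n+1)} {S : Finset (Fin (n+1))} (hiS : i ∈ S) (j : Fin (n+1)) :
    cnt G par r i (nbrs G i) S j = incF G par r i S j := by
  classical
  rw [cnt, incF]
  by_cases hj : j ∈ S
  · rw [if_pos hj, if_pos hj]
  · rw [if_neg hj, if_neg hj]
    have hji : j ≠ i := fun h => hj (h ▸ hiS)
    by_cases hwij : wanc par i j
    · rw [if_pos hwij, Bcard]
      congr 1
      apply Finset.filter_congr
      intro a _
      constructor
      · rintro ⟨hadj, ⟨rfl, hjl, hx⟩ | ⟨c', hc', h2, h3, h4, h5⟩⟩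
        · refine ⟨wanc_refl a, hadj, ?_⟩
          exact (scanB_of_wanc hroot hreach hwij (Ne.symm hji)).mpr (hx hwij)
        · exact ⟨wanc_trans (h2 ▸ wanc_parent) h4, hadj, h5 hwij⟩
      · rintro ⟨hwia, hadj, hs⟩
        by_cases hai : a = i
        · subst hai
          refine ⟨hadj, Or.inl ⟨rfl, mem_nbrs.mpr hadj, fun _ => ?_⟩⟩
          exact (scanB_of_wanc hroot hreach hwij (Ne.symm hji)).mp hs
        · have hcw := ct_wanc hroot hreach hwia (Ne.symm hai)
          have hcp := ct_parent hroot hreach hwia (Ne.symm hai)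
          have hcni := ct_ne hroot hreach hwia (Ne.symm hai)
          have hcr : ct par r i a ≠ r := child_ne_root hroot hcp hcni
          have hmem : ct par r i a ∈ nbrs G i := by
            rw [mem_nbrs]
            have := hadjpar _ hcr
            rwa [hcp] at this
          exact ⟨hadj, Or.inr ⟨_, hmem, hcp, hcni, hcw, fun _ => hs⟩⟩
    · rw [if_neg hwij, Acard]
      congr 1
      apply Finset.filter_congr
      intro a _
      constructor
      · rintro ⟨hadj, ⟨rfl, hjl, hx⟩ | ⟨c', hc', h2, h3, h4, h5⟩⟩
        · exact ⟨wanc_refl a, hadj⟩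
        · exact ⟨wanc_trans (h2 ▸ wanc_parent) h4, hadj⟩
      · rintro ⟨hwia, hadj⟩
        by_cases hai : a = i
        · subst hai
          exact ⟨hadj, Or.inl ⟨rfl, mem_nbrs.mpr hadj, fun h => absurd h hwij⟩⟩
        · have hcw := ct_wanc hroot hreach hwia (Ne.symm hai)
          have hcp := ct_parent hroot hreach hwia (Ne.symm hai)
          have hcni := ct_ne hroot hreach hwia (Ne.symm hai)
          have hcr : ct par r i a ≠ r := child_ne_root hroot hcp hcni
          have hmem : ct par r i a ∈ nbrs G i := by
            rw [mem_nbrs]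
            have := hadjpar _ hcr
            rwa [hcp] at this
          exact ⟨hadj, Or.inr ⟨_, hmem, hcp, hcni, hcw, fun h => absurd h hwij⟩⟩

open Classical in
noncomputable def CU (par : Fin (n+1) → Fin (n+1)) (i : Fin (n+1))
    (l : List (Fin (n+1))) : Finset (Fin (n+1)) :=
  (l.toFinset.filter (fun c => par c = i)).biUnion (fun c => Dfin par c)

lemma mem_CU {par : Fin (n+1) → Fin (n+1)} {i v : Fin (n+1)} {l : List (Fin (n+1))} :
    v ∈ CU par i l ↔ ∃ c ∈ l, par c = i ∧ wanc par c v := by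
  simp only [CU, Finset.mem_biUnion, Finset.mem_filter, List.mem_toFinset, mem_Dfin]
  constructor
  · rintro ⟨c, ⟨h1, h2⟩, h3⟩; exact ⟨c, h1, h2, h3⟩
  · rintro ⟨c, h1, h2, h3⟩; exact ⟨c, ⟨h1, h2⟩, h3⟩

lemma CU_cons_nonchild {par : Fin (n+1) → Fin (n+1)} {i c : Fin (n+1)}
    {l : List (Fin (n+1))} (hnc : par c ≠ i) : CU par i (c :: l) = CU par i l := by
  ext v
  simp only [mem_CU, List.mem_cons]
  constructor
  · rintro ⟨c', (rfl | h), h2, h3⟩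
    · exact absurd h2 hnc
    · exact ⟨c', h, h2, h3⟩
  · rintro ⟨c', h, h2, h3⟩
    exact ⟨c', Or.inr h, h2, h3⟩

lemma CU_cons_child {par : Fin (n+1) → Fin (n+1)} {i c : Fin (n+1)}
    {l : List (Fin (n+1))} (hch : par c = i) :
    CU par i (c :: l) = Dfin par c ∪ CU par i l := by
  ext v
  simp only [mem_CU, List.mem_cons, Finset.mem_union, mem_Dfin]
  constructor
  · rintro ⟨c', (rfl | h), h2, h3⟩
    · exact Or.inl h3
    · exact Or.inr ⟨c', h, h2, h3⟩
  · rintro (h | ⟨c', h, h2, h3⟩)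
    · exact ⟨c, Or.inl rfl, hch, h⟩
    · exact ⟨c', Or.inr h, h2, h3⟩

lemma treeStep_spec (hroot : par r = r) (hreach : ∀ v, ∃ k, par^[k] v = r)
    (hadjpar : ∀ v, v ≠ r → G.Adj (par v) v) :
    ∀ fuel (i : Fin (n+1)) (S : Finset (Fin (n+1))) (P : Fin (n+1) → ℕ),
      i ∈ S → (∀ v, wanc par i v → v ≠ i → v ∉ S) →
      (∀ v, wanc par i v → dep par r v < dep par r i + fuel) →
      treeStep G par fuel i (S, P) =
        (S ∪ Dfin par i, fun j => P j + incF G par r i S j) := by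
  intro fuel
  induction fuel with
  | zero =>
    intro i S P _ _ hdep
    exact absurd (hdep i (wanc_refl i)) (by omega)
  | succ fuel IH =>
    intro i S P hiS hSdis hdep
    have inner : ∀ l : List (Fin (n+1)), l.Pairwise (· > ·) → (∀ x ∈ l, G.Adj i x) →
        ∀ S' P' , i ∈ S' →
        (∀ c ∈ l, par c = i → c ∉ S') →
        (∀ v, wanc par i v → v ≠ i → v ∉ S' → ct par r i v ∈ l) →
        (∀ v, wanc par i v → v ≠ i → v ∈ S' → ct par r i v ∈ S') →
        List.foldl (fun st j => if j ∈ st.1 then st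
          else if par j = i then treeStep G par fuel j (insert j st.1, st.2)
          else (st.1, Function.update st.2 j (st.2 j + 1))) (S', P') l
        = (S' ∪ CU par i l, fun j => P' j + cnt G par r i l S' j) := by
      intro l
      induction l with
      | nil =>
        intro _ _ S' P' _ _ _ _
        rw [List.foldl_nil]
        have e1 : S' ∪ CU par i [] = S' := by
          ext v; simp [mem_CU]
        have e2 : (fun j => P' j + cnt G par r i [] S' j) = P' := by
          funext j; rw [cnt_nil]; omega
        rw [e1, e2]
      | cons c l ihl =>
        intro hsort hadjl S' P' hiS' h2 h3 h4
        obtain ⟨hheadgt, hsort'⟩ := List.pairwise_cons.mp hsort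
        have hlt : ∀ x ∈ l, x < c := fun x hx => hheadgt x hx
        have hadjc : G.Adj i c := hadjl c (List.mem_cons_self)
        have hci : c ≠ i := hadjc.ne'
        have hadjl' : ∀ x ∈ l, G.Adj i x := fun x hx => hadjl x (List.mem_cons_of_mem _ hx)
        rw [List.foldl_cons]
        by_cases hcS : c ∈ S'
        · rw [if_pos (show c ∈ (S', P').1 from hcS)]
          have hnc : par c ≠ i := fun hch => (h2 c (List.mem_cons_self) hch) hcS
          have h3' : ∀ v, wanc par i v → v ≠ i → v ∉ S' → ct par r i v ∈ l := by
            intro v hw hvi hvS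
            rcases List.mem_cons.mp (h3 v hw hvi hvS) with h' | h'
            · exfalso
              exact hnc (h' ▸ ct_parent hroot hreach hw (Ne.symm hvi))
            · exact h'
          rw [ihl hsort' hadjl' S' P' hiS'
            (fun c' hc' => h2 c' (List.mem_cons_of_mem _ hc')) h3' h4]
          rw [CU_cons_nonchild hnc]
          have : (fun j => P' j + cnt G par r i (c :: l) S' j)
              = (fun j => P' j + cnt G par r i l S' j) := by
            funext j; rw [cnt_cons_visited hcS hnc]
          rw [this]
        · rw [if_neg (show c ∉ (S', P').1 from hcS)]
          by_cases hch : par c = i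
          · rw [if_pos hch]
            have hwic : wanc par i c := hch ▸ wanc_parent
            have hsub : ∀ v, wanc par c v → v ≠ c → v ∉ insert c S' := by
              intro v hwcv hvc
              have hwiv : wanc par i v := wanc_trans hwic hwcv
              have hvi : v ≠ i := by
                intro h
                exact not_wanc_child_parent hroot hreach hch hci (h ▸ hwcv)
              simp only [Finset.mem_insert]
              rintro (h | h)
              · exact hvc h
              · have := h4 v hwiv hvi h
                rw [ct_eq hroot hreach hch hci hwcv] at this
                exact hcS this
            have hdep' : ∀ v, wanc par c v → dep par r v < dep par r c + fuel := by
              intro v hwcv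
              have := hdep v (wanc_trans hwic hwcv)
              have hdc := child_dep hroot hreach hch hci
              omega
            rw [IH c (insert c S') P' (Finset.mem_insert_self _ _) hsub hdep']
            have hS'' : insert c S' ∪ Dfin par c = S' ∪ Dfin par c := by
              ext v
              simp only [Finset.mem_insert, Finset.mem_union, mem_Dfin]
              constructor
              · rintro ((rfl | h) | h)
                · exact Or.inr (wanc_refl v)
                · exact Or.inl h
                · exact Or.inr h
              · rintro (h | h)
                · exact Or.inl (Or.inr h)
                · exact Or.inr h
            rw [hS'']
            -- invariants for the tail
            have h2'' : ∀ c' ∈ l, par c' = i → c' ∉ S' ∪ Dfin par c := by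
              intro c' hc' hch'
              simp only [Finset.mem_union, mem_Dfin]
              rintro (h | h)
              · exact h2 c' (List.mem_cons_of_mem _ hc') hch' h
              · have hci' : c' ≠ i := (hadjl' c' hc').ne'
                have hd := child_dep hroot hreach hch hci
                have hd' := child_dep hroot hreach hch' hci'
                have := wanc_eq_of_dep hroot hreach h (by omega)
                exact (ne_of_lt (hlt c' hc')) this.symm
            have h3'' : ∀ v, wanc par i v → v ≠ i → v ∉ S' ∪ Dfin par c →
                ct par r i v ∈ l := by
              intro v hw hvi hvS
              simp only [Finset.mem_union, mem_Dfin] at hvS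
              push_neg at hvS
              rcases List.mem_cons.mp (h3 v hw hvi hvS.1) with h' | h'
              · exfalso
                have := ct_wanc hroot hreach hw (Ne.symm hvi)
                rw [h'] at this
                exact hvS.2 this
              · exact h'
            have h4'' : ∀ v, wanc par i v → v ≠ i → v ∈ S' ∪ Dfin par c →
                ct par r i v ∈ S' ∪ Dfin par c := by
              intro v hw hvi hvS
              simp only [Finset.mem_union, mem_Dfin] at hvS ⊢
              rcases hvS with h | h
              · exact Or.inl (h4 v hw hvi h)
              · by_cases hvc : v = c
                · subst hvc
                  rw [ct_eq hroot hreach hch hci (wanc_refl v)]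
                  exact Or.inr (wanc_refl v)
                · rw [ct_eq hroot hreach hch hci h]
                  exact Or.inr (wanc_refl c)
            rw [ihl hsort' hadjl' (S' ∪ Dfin par c) _
              (Finset.mem_union_left _ hiS') h2'' h3'' h4'']
            rw [CU_cons_child hch]
            have hsets : S' ∪ Dfin par c ∪ CU par i l = S' ∪ (Dfin par c ∪ CU par i l) := by
              rw [Finset.union_assoc]
            rw [hsets]
            have hfun : (fun j => (P' j + incF G par r c (insert c S') j)
                  + cnt G par r i l (S' ∪ Dfin par c) j)
                = (fun j => P' j + cnt G par r i (c :: l) S' j) := by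
              funext j
              rw [cnt_cons_child hroot hreach hcS hch hci hiS' hlt h3]
              omega
            rw [hfun]
          · rw [if_neg hch]
            have h3' : ∀ v, wanc par i v → v ≠ i → v ∉ S' → ct par r i v ∈ l := by
              intro v hw hvi hvS
              rcases List.mem_cons.mp (h3 v hw hvi hvS) with h' | h'
              · exfalso
                exact hch (h' ▸ ct_parent hroot hreach hw (Ne.symm hvi))
              · exact h'
            rw [ihl hsort' hadjl' S' _ hiS'
              (fun c' hc' => h2 c' (List.mem_cons_of_mem _ hc')) h3' h4]
            rw [CU_cons_nonchild hch]
            have h3c : wanc par i c → ct par r i c ∈ l := fun hw => h3' c hw hci hcS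
            have hfun : (fun j => Function.update P' c (P' c + 1) j
                  + cnt G par r i l S' j)
                = (fun j => P' j + cnt G par r i (c :: l) S' j) := by
              funext j
              rw [cnt_cons_nonchild hroot hreach hcS hch hadjc hlt h3c,
                Function.update_apply]
              by_cases hjc : j = c
              · rw [if_pos hjc, if_pos hjc]
                subst hjc
                omega
              · rw [if_neg hjc, if_neg hjc]; omega
            rw [hfun]
    -- apply the inner induction to the full neighbor list
    rw [treeStep]
    have h2top : ∀ c ∈ nbrs G i, par c = i → c ∉ S := by
      intro c hc hch
      exact hSdis c (hch ▸ wanc_parent) (mem_nbrs.mp hc).ne'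
    have h3top : ∀ v, wanc par i v → v ≠ i → v ∉ S → ct par r i v ∈ nbrs G i := by
      intro v hw hvi _
      have hcp := ct_parent hroot hreach hw (Ne.symm hvi)
      have hcni := ct_ne hroot hreach hw (Ne.symm hvi)
      have hcr : ct par r i v ≠ r := child_ne_root hroot hcp hcni
      rw [mem_nbrs]
      have := hadjpar _ hcr
      rwa [hcp] at this
    have h4top : ∀ v, wanc par i v → v ≠ i → v ∈ S → ct par r i v ∈ S := by
      intro v hw hvi hvS
      exact absurd hvS (hSdis v hw hvi)
    rw [inner (nbrs G i) (nbrs_sorted G i) (fun x hx => mem_nbrs.mp hx) S P hiS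
      h2top h3top h4top]
    have hS : S ∪ CU par i (nbrs G i) = S ∪ Dfin par i := by
      ext v
      simp only [Finset.mem_union, mem_CU, mem_Dfin]
      constructor
      · rintro (h | ⟨c, hcm, hch, hw⟩)
        · exact Or.inl h
        · exact Or.inr (wanc_trans (hch ▸ wanc_parent) hw)
      · rintro (h | hw)
        · exact Or.inl h
        · by_cases hvi : v = i
          · exact Or.inl (hvi ▸ hiS)
          · by_cases hvS : v ∈ S
            · exact Or.inl hvS
            · refine Or.inr ⟨ct par r i v, ?_,
                ct_parent hroot hreach hw (Ne.symm hvi),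
                ct_wanc hroot hreach hw (Ne.symm hvi)⟩
              exact h3top v hw hvi hvS
    have hP : (fun j => P j + cnt G par r i (nbrs G i) S j)
        = (fun j => P j + incF G par r i S j) := by
      funext j
      rw [cnt_nbrs hroot hreach hadjpar hiS]
    rw [hS, hP]

lemma scanB_asymm (hroot : par r = r) (hreach : ∀ v, ∃ k, par^[k] v = r)
    {a j : Fin (n+1)} (h1 : scanB par r a j) (h2 : scanB par r j a) : False := by
  have hcomm : lca par j a = lca par a j := lca_comm hroot hreach j a
  rcases h1 with ⟨g1, g2, g3⟩ | ⟨g1, g2, g3⟩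
  · rcases h2 with ⟨f1, f2, f3⟩ | ⟨f1, f2, f3⟩
    · rw [hcomm, g1] at f1; exact g2 f1
    · rw [hcomm] at f2; exact f2 g1
  · rcases h2 with ⟨f1, f2, f3⟩ | ⟨f1, f2, f3⟩
    · rw [hcomm] at f1; exact g2 f1
    · rw [hcomm] at f3; exact lt_asymm g3 f3

lemma self_ne_parent (hroot : par r = r) (hreach : ∀ v, ∃ k, par^[k] v = r)
    {v : Fin (n+1)} (hv : v ≠ r) : v ≠ par v := by
  intro h
  exact hv (eq_root_of_cycle hroot hreach Nat.one_pos (show par^[1] v = v from h.symm))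

lemma kappa_facts (hroot : par r = r) (hreach : ∀ v, ∃ k, par^[k] v = r)
    {i j : Fin (n+1)} (h : IsKappaInversion G r par i j) :
    wanc par i j ∧ i ≠ j ∧ i ≠ par i ∧ ct par r (par i) j = i ∧
      wanc par (par i) j ∧ par i ≠ j := by
  obtain ⟨⟨k, hk0, hkit⟩, hji, hir, hadj⟩ := h
  have hwij : wanc par i j := ⟨k, hkit⟩
  have hij : i ≠ j := by
    rintro rfl
    exact hir (eq_root_of_cycle hroot hreach hk0 hkit)
  have hipi : i ≠ par i := self_ne_parent hroot hreach hir
  have hct : ct par r (par i) j = i := ct_eq hroot hreach rfl hipi hwij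
  have hwpj : wanc par (par i) j := wanc_trans wanc_parent hwij
  have hpij : par i ≠ j := by
    intro h'
    have : wanc par j i := h' ▸ wanc_parent
    exact hij (wanc_antisymm hroot hreach hwij this)
  exact ⟨hwij, hij, hipi, hct, hwpj, hpij⟩

lemma not_root_of_child (hroot : par r = r) (hreach : ∀ v, ∃ k, par^[k] v = r)
    {c w : Fin (n+1)} (hc : par c = w) (hcw : c ≠ w) : c ≠ r :=
  child_ne_root hroot hc hcw

open Classical in
noncomputable def fP (G : SimpleGraph (Fin (n+1))) (par : Fin (n+1) → Fin (n+1))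
    (r : Fin (n+1)) : Finset (Fin (n+1) × Fin (n+1)) :=
  univ.filter (fun p => G.Adj p.1 p.2 ∧ scanB par r p.1 p.2)

open Classical in
noncomputable def kP (G : SimpleGraph (Fin (n+1))) (par : Fin (n+1) → Fin (n+1))
    (r : Fin (n+1)) : Finset (Fin (n+1) × Fin (n+1)) :=
  univ.filter (fun p => IsKappaInversion G r par p.1 p.2)

open Classical in
noncomputable def NT (G : SimpleGraph (Fin (n+1))) (par : Fin (n+1) → Fin (n+1))
    (r : Fin (n+1)) : Finset (Sym2 (Fin (n+1))) :=
  univ.filter (fun e => e ∈ G.edgeSet ∧ e ∉ treeEdges r par)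

lemma NT_eq (hroot : par r = r) (hreach : ∀ v, ∃ k, par^[k] v = r) :
    NT G par r = (fP G par r).image (fun p => s(p.1, p.2)) ∪
      (kP G par r).image (fun p => s(par p.1, p.2)) := by
  classical
  ext e
  simp only [NT, fP, kP, Finset.mem_union, Finset.mem_image, Finset.mem_filter,
    Finset.mem_univ, true_and]
  constructor
  · rintro ⟨hE, hT⟩
    induction e using Sym2.ind with
    | _ x y =>
    rw [SimpleGraph.mem_edgeSet] at hE
    have hxy : x ≠ y := hE.ne
    by_cases hwx : wanc par x y
    · -- x is a strict ancestor of y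
      have hyr : y ≠ r := by
        rintro rfl
        exact hxy (wanc_root_eq hroot hwx)
      have hxpy : x ≠ par y := by
        intro h
        exact hT ⟨y, hyr, by rw [← h]⟩
      have hcw := ct_wanc hroot hreach hwx hxy
      have hcp := ct_parent hroot hreach hwx hxy
      have hcnx := ct_ne hroot hreach hwx hxy
      have hcny : ct par r x y ≠ y := by
        intro h
        rw [h] at hcp
        exact hxpy hcp.symm
      rcases lt_trichotomy (ct par r x y) y with hlt | heq | hgt
      · exact Or.inl ⟨(x, y), ⟨hE,
          Or.inl ⟨lca_of_wanc_left hroot hreach hwx, hxy, hlt⟩⟩, rfl⟩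
      · exact absurd heq hcny
      · have hanc : IsAncestor par (ct par r x y) y := by
          have hd := wanc_dep_lt hroot hreach hcw hcny
          have h2' := ((wanc_iff hroot hreach).mp hcw).2
          exact ⟨dep par r y - dep par r (ct par r x y), by omega, h2'⟩
        have hcr : ct par r x y ≠ r := by
          intro h
          have hcd := ct_dep hroot hreach hwx hxy
          rw [h, dep_root hreach] at hcd
          omega
        refine Or.inr ⟨(ct par r x y, y), ⟨hanc, hgt, hcr, ?_⟩, ?_⟩
        · show G.Adj (par (ct par r x y)) y
          rw [hcp]; exact hE
        · show s(par (ct par r x y), y) = s(x, y)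
          rw [hcp]
    · by_cases hwy : wanc par y x
      · -- y is a strict ancestor of x
        have hxr : x ≠ r := by
          rintro rfl
          exact hxy (wanc_root_eq hroot hwy).symm
        have hypx : y ≠ par x := by
          intro h
          exact hT ⟨x, hxr, by rw [← h, Sym2.eq_swap]⟩
        have hyx : y ≠ x := Ne.symm hxy
        have hcw := ct_wanc hroot hreach hwy hyx
        have hcp := ct_parent hroot hreach hwy hyx
        have hcnx : ct par r y x ≠ x := by
          intro h
          rw [h] at hcp
          exact hypx hcp.symm
        rcases lt_trichotomy (ct par r y x) x with hlt | heq | hgt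
        · exact Or.inl ⟨(y, x), ⟨hE.symm,
            Or.inl ⟨lca_of_wanc_left hroot hreach hwy, hyx, hlt⟩⟩, Sym2.eq_swap⟩
        · exact absurd heq hcnx
        · have hanc : IsAncestor par (ct par r y x) x := by
            have hd := wanc_dep_lt hroot hreach hcw hcnx
            have h2' := ((wanc_iff hroot hreach).mp hcw).2
            exact ⟨dep par r x - dep par r (ct par r y x), by omega, h2'⟩
          have hcr : ct par r y x ≠ r := by
            intro h
            have hcd := ct_dep hroot hreach hwy hyx
            rw [h, dep_root hreach] at hcd
            omega
          refine Or.inr ⟨(ct par r y x, x), ⟨hanc, hgt, hcr, ?_⟩, ?_⟩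
          · show G.Adj (par (ct par r y x)) x
            rw [hcp]; exact hE.symm
          · show s(par (ct par r y x), x) = s(x, y)
            rw [hcp]; exact Sym2.eq_swap
      · -- x and y are incomparable
        set w := lca par x y with hw
        have hwxw : wanc par w x := lca_wanc_left hreach x y
        have hwyw : wanc par w y := lca_wanc_right hreach x y
        have hwnx : w ≠ x := by
          intro h
          exact hwx (h ▸ hwyw)
        have hwny : w ≠ y := by
          intro h
          exact hwy (h ▸ hwxw)
        have hcx := ct_wanc hroot hreach hwxw hwnx
        have hcy := ct_wanc hroot hreach hwyw hwny
        have hcne : ct par r w x ≠ ct par r w y := by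
          intro h
          have h1 : wanc par (ct par r w x) y := h ▸ hcy
          have h2 : wanc par (ct par r w x) w :=
            lca_greatest hreach hcx h1
          have hp := ct_parent hroot hreach hwxw hwnx
          have h3 : wanc par w (ct par r w x) := ⟨1, hp⟩
          exact ct_ne hroot hreach hwxw hwnx
            (wanc_antisymm hroot hreach h2 h3)
        rcases lt_trichotomy (ct par r w y) (ct par r w x) with hlt | heq | hgt
        · exact Or.inl ⟨(x, y), ⟨hE, Or.inr ⟨hwnx, hwny, hlt⟩⟩, rfl⟩
        · exact absurd heq (Ne.symm hcne)
        · refine Or.inl ⟨(y, x), ⟨hE.symm, Or.inr ⟨?_, ?_, ?_⟩⟩, Sym2.eq_swap⟩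
          · show lca par y x ≠ y
            rw [lca_comm hroot hreach]; exact hwny
          · show lca par y x ≠ x
            rw [lca_comm hroot hreach]; exact hwnx
          · show ct par r (lca par y x) x < ct par r (lca par y x) y
            rw [lca_comm hroot hreach]; exact hgt
  · rintro (⟨p, ⟨hadj, hs⟩, rfl⟩ | ⟨p, hk, rfl⟩)
    · refine ⟨(SimpleGraph.mem_edgeSet G).mpr hadj, ?_⟩
      rintro ⟨v, hvr, hev⟩
      have hvpv : v ≠ par v := self_ne_parent hroot hreach hvr
      rcases Sym2.eq_iff.mp hev with ⟨h1, h2⟩ | ⟨h1, h2⟩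
      · rw [h1, h2] at hs
        rcases hs with ⟨g1, g2, g3⟩ | ⟨g1, g2, g3⟩
        · rw [ct_eq hroot hreach rfl hvpv (wanc_refl _)] at g3
          exact absurd g3 (lt_irrefl _)
        · exact g1 (lca_of_wanc_left hroot hreach wanc_parent)
      · rw [h1, h2] at hs
        have hl : lca par v (par v) = par v :=
          lca_of_wanc_right hroot hreach wanc_parent
        rcases hs with ⟨g1, g2, g3⟩ | ⟨g1, g2, g3⟩
        · exact hvpv (g1.symm.trans hl)
        · exact g2 hl
    · obtain ⟨hwij, hij, hipi, hct, hwpj, hpij⟩ := kappa_facts hroot hreach hk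
      refine ⟨(SimpleGraph.mem_edgeSet G).mpr hk.2.2.2, ?_⟩
      rintro ⟨v, hvr, hev⟩
      have hvpv : v ≠ par v := self_ne_parent hroot hreach hvr
      rcases Sym2.eq_iff.mp hev with ⟨h1, h2⟩ | ⟨h1, h2⟩
      · have hv : ct par r (par v) v = v := ct_eq hroot hreach rfl hvpv (wanc_refl _)
        rw [← h1, ← h2, hct] at hv
        exact hij hv
      · have hw1 : wanc par p.2 p.1 := by
          rw [h2, ← h1]
          exact ⟨2, rfl⟩
        exact hij (wanc_antisymm hroot hreach hwij hw1)
lemma fP_injOn (hroot : par r = r) (hreach : ∀ v, ∃ k, par^[k] v = r) :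
    Set.InjOn (fun p : Fin (n+1) × Fin (n+1) => s(p.1, p.2)) ↑(fP G par r) := by
  classical
  intro p hp q hq h
  simp only [Finset.coe_filter, fP, Set.mem_setOf_eq, Finset.mem_univ, true_and] at hp hq
  rcases Sym2.eq_iff.mp h with ⟨h1, h2⟩ | ⟨h1, h2⟩
  · exact Prod.ext h1 h2
  · exfalso
    have hq2 := hq.2
    rw [← h1, ← h2] at hq2
    exact scanB_asymm hroot hreach hp.2 hq2

lemma kP_injOn (hroot : par r = r) (hreach : ∀ v, ∃ k, par^[k] v = r) :
    Set.InjOn (fun p : Fin (n+1) × Fin (n+1) => s(par p.1, p.2)) ↑(kP G par r) := by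
  classical
  intro p hp q hq h
  simp only [Finset.coe_filter, kP, Set.mem_setOf_eq, Finset.mem_univ, true_and] at hp hq
  obtain ⟨hwp, hijp, hipip, hctp, hwpjp, hpijp⟩ := kappa_facts hroot hreach hp
  obtain ⟨hwq, hijq, hipiq, hctq, hwpjq, hpijq⟩ := kappa_facts hroot hreach hq
  rcases Sym2.eq_iff.mp h with ⟨h1, h2⟩ | ⟨h1, h2⟩
  · refine Prod.ext ?_ h2
    rw [← h1, ← h2] at hctq
    exact hctp.symm.trans hctq
  · exfalso
    have hw1 : wanc par p.1 q.1 := by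
      have : wanc par p.1 (par q.1) := by rw [← h2]; exact hwp
      exact wanc_trans this wanc_parent
    have hw2 : wanc par q.1 p.1 := by
      have : wanc par q.1 (par p.1) := by rw [h1]; exact hwq
      exact wanc_trans this wanc_parent
    have heq := wanc_antisymm hroot hreach hw1 hw2
    rw [← h1, heq] at hwq
    exact hipiq (wanc_antisymm hroot hreach hwq wanc_parent)

lemma images_disjoint (hroot : par r = r) (hreach : ∀ v, ∃ k, par^[k] v = r) :
    Disjoint ((fP G par r).image (fun p => s(p.1, p.2)))
      ((kP G par r).image (fun p => s(par p.1, p.2))) := by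
  classical
  rw [Finset.disjoint_left]
  rintro e he1 he2
  obtain ⟨p, hp, rfl⟩ := Finset.mem_image.mp he1
  obtain ⟨q, hq, he⟩ := Finset.mem_image.mp he2
  simp only [fP, kP, Finset.mem_filter, Finset.mem_univ, true_and] at hp hq
  obtain ⟨hwq, hijq, hipiq, hctq, hwpjq, hpijq⟩ := kappa_facts hroot hreach hq
  have hs := hp.2
  rcases Sym2.eq_iff.mp he with ⟨h1, h2⟩ | ⟨h1, h2⟩
  · rw [← h1, ← h2] at hs
    have hl : lca par (par q.1) q.2 = par q.1 :=
      lca_of_wanc_left hroot hreach hwpjq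
    rcases hs with ⟨g1, g2, g3⟩ | ⟨g1, g2, g3⟩
    · rw [hctq] at g3
      exact lt_asymm g3 hq.2.1
    · exact g1 hl
  · rw [← h2, ← h1] at hs
    have hl : lca par q.2 (par q.1) = par q.1 :=
      lca_of_wanc_right hroot hreach hwpjq
    rcases hs with ⟨g1, g2, g3⟩ | ⟨g1, g2, g3⟩
    · exact hpijq (hl.symm.trans g1)
    · exact g2 hl

lemma NT_card (hroot : par r = r) (hreach : ∀ v, ∃ k, par^[k] v = r) :
    (NT G par r).card = (fP G par r).card + (kP G par r).card := by
  rw [NT_eq hroot hreach, Finset.card_union_of_disjoint (images_disjoint hroot hreach),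
    Finset.card_image_of_injOn (fP_injOn hroot hreach),
    Finset.card_image_of_injOn (kP_injOn hroot hreach)]

open Classical in
lemma fP_card_eq (hroot : par r = r) (hreach : ∀ v, ∃ k, par^[k] v = r) :
    ∑ j ∈ univ.erase r, (univ.filter fun a => G.Adj a j ∧ scanB par r a j).card
      = (fP G par r).card := by
  classical
  have h1 : (fP G par r).card
      = ∑ p : Fin (n+1) × Fin (n+1),
          if G.Adj p.1 p.2 ∧ scanB par r p.1 p.2 then 1 else 0 := by
    rw [fP, Finset.card_filter]
  rw [h1, Fintype.sum_prod_type_right]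
  have h2 : ∀ j : Fin (n+1), ∑ a : Fin (n+1),
      (if G.Adj a j ∧ scanB par r a j then 1 else 0)
      = (univ.filter fun a => G.Adj a j ∧ scanB par r a j).card := by
    intro j
    rw [Finset.card_filter]
  have h3 : (∑ a : Fin (n+1), if G.Adj a r ∧ scanB par r a r then 1 else 0) = 0 := by
    apply Finset.sum_eq_zero
    intro a _
    rw [if_neg]
    rintro ⟨-, hs⟩
    exact scanB_not_root hroot hreach a hs
  rw [← Finset.sum_erase univ (by rw [h3])]
  apply Finset.sum_congr rfl
  intro j _
  rw [h2]

open Classical in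
noncomputable def treeE (par : Fin (n+1) → Fin (n+1)) (r : Fin (n+1)) :
    Finset (Sym2 (Fin (n+1))) :=
  (univ.erase r).image (fun v => s(par v, v))

lemma mem_treeE {e : Sym2 (Fin (n+1))} :
    e ∈ treeE par r ↔ e ∈ treeEdges r par := by
  classical
  simp only [treeE, treeEdges, Finset.mem_image, Finset.mem_erase, Finset.mem_univ,
    and_true, Set.mem_setOf_eq]
  constructor
  · rintro ⟨v, hv, rfl⟩; exact ⟨v, hv, rfl⟩
  · rintro ⟨v, hv, rfl⟩; exact ⟨v, hv, rfl⟩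

lemma treeE_card (hroot : par r = r) (hreach : ∀ v, ∃ k, par^[k] v = r) :
    (treeE par r).card = n := by
  classical
  have hinj : Set.InjOn (fun v => s(par v, v)) ↑(univ.erase r) := by
    intro u hu v hv h
    simp only [Finset.coe_erase, Set.mem_diff, Finset.mem_coe, Set.mem_singleton_iff] at hu hv
    rcases Sym2.eq_iff.mp h with ⟨h1, h2⟩ | ⟨h1, h2⟩
    · exact h2
    · exfalso
      have hcyc : par^[2] u = u := by
        show par (par u) = u
        rw [h1, ← h2]
      exact hu.2 (eq_root_of_cycle hroot hreach (by omega) hcyc)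
  rw [treeE, Finset.card_image_of_injOn hinj,
    Finset.card_erase_of_mem (Finset.mem_univ r), Finset.card_univ, Fintype.card_fin]
  omega

open Classical in
noncomputable def Efin (G : SimpleGraph (Fin (n+1))) : Finset (Sym2 (Fin (n+1))) :=
  univ.filter (fun e => e ∈ G.edgeSet)

lemma E_card (hroot : par r = r) (hreach : ∀ v, ∃ k, par^[k] v = r)
    (hadjpar : ∀ v, v ≠ r → G.Adj (par v) v) :
    (Efin G).card = (NT G par r).card + n := by
  classical
  have hsub : treeE par r ⊆ Efin G := by
    intro e he
    rw [mem_treeE] at he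
    obtain ⟨v, hv, rfl⟩ := he
    simp only [Efin, Finset.mem_filter, Finset.mem_univ, true_and]
    exact (SimpleGraph.mem_edgeSet G).mpr (hadjpar v hv)
  have hNT : NT G par r = Efin G \ treeE par r := by
    ext e
    simp only [NT, Efin, Finset.mem_filter, Finset.mem_univ, true_and, Finset.mem_sdiff,
      mem_treeE]
  have hc := Finset.card_sdiff_add_card_eq_card hsub
  rw [treeE_card hroot hreach] at hc
  rw [hNT]
  omega

end MainLemmas

end Aux
end PFG

/-- The tree-to-parking-function procedure applied to a spanning tree `T` of a
connected graph `G` produces `P_T` with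
`deg P_T = #(edges of G not in T) - κ(G,T)` (stated additively); in
particular `deg P_T ≤ g = |E| - |V| + 1`. -/
theorem treeToPF_degree {n : ℕ} (G : SimpleGraph (Fin (n+1)))
    (hG : G.Connected) (r : Fin (n+1)) (T : PFG.RootedSpanningTree G r) :
    PFG.degPF r (PFG.treeToPF G r T.parent) + PFG.kappaNum G r T.parent =
        Set.ncard {e : Sym2 (Fin (n+1)) | e ∈ G.edgeSet ∧
          e ∉ PFG.treeEdges r T.parent} ∧
      PFG.degPF r (PFG.treeToPF G r T.parent) + (n + 1) ≤ G.edgeSet.ncard + 1 := by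
  classical
  set par := T.parent with hpar
  have hroot : par r = r := T.parent_root
  have hadjpar : ∀ v, v ≠ r → G.Adj (par v) v := T.adj_parent
  have hreach : ∀ v, ∃ k, par^[k] v = r := T.reaches_root
  have hspec := PFG.Aux.treeStep_spec (G := G) (par := par) (r := r) hroot hreach hadjpar
    (n+1) r {r} (fun _ => 0) (Finset.mem_singleton_self r)
    (fun v _ hv => by simp only [Finset.mem_singleton]; exact hv)
    (fun v _ => by
      have h1 := PFG.Aux.dep_le_n (par := par) (r := r) hroot hreach v
      have h2 := PFG.Aux.dep_root (par := par) (r := r) hreach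
      omega)
  have hPT : PFG.treeToPF G r par = fun j => 0 + PFG.Aux.incF G par r r {r} j := by
    rw [PFG.treeToPF, hspec]
  have hdeg : PFG.degPF r (PFG.treeToPF G r par) = (PFG.Aux.fP G par r).card := by
    rw [PFG.degPF, ← PFG.Aux.fP_card_eq (G := G) hroot hreach]
    apply Finset.sum_congr rfl
    intro j hj
    have hjr : j ≠ r := (Finset.mem_erase.mp hj).1
    simp only [hPT]
    rw [Nat.zero_add, PFG.Aux.incF,
      if_neg (by simp [hjr] : j ∉ ({r} : Finset (Fin (n+1)))),
      if_pos (PFG.Aux.wanc_root hreach j), PFG.Aux.Bcard]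
    congr 1
    apply Finset.filter_congr
    intro a _
    constructor
    · rintro ⟨_, h2, h3⟩; exact ⟨h2, h3⟩
    · rintro ⟨h2, h3⟩; exact ⟨PFG.Aux.wanc_root hreach a, h2, h3⟩
  have hkap : PFG.kappaNum G r par = (PFG.Aux.kP G par r).card := by
    rw [PFG.kappaNum]
    have hset : {p : Fin (n+1) × Fin (n+1) | PFG.IsKappaInversion G r par p.1 p.2}
        = ↑(PFG.Aux.kP G par r) := by
      ext p
      simp [PFG.Aux.kP]
    rw [hset, Set.ncard_coe_finset]
  have hNTset : {e : Sym2 (Fin (n+1)) | e ∈ G.edgeSet ∧ e ∉ PFG.treeEdges r par}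
      = ↑(PFG.Aux.NT G par r) := by
    ext e
    simp [PFG.Aux.NT]
  have hEset : G.edgeSet = ↑(PFG.Aux.Efin G) := by
    ext e
    simp [PFG.Aux.Efin]
  have hNTcard := PFG.Aux.NT_card (G := G) (par := par) (r := r) hroot hreach
  have hEcard := PFG.Aux.E_card (G := G) (par := par) (r := r) hroot hreach hadjpar
  constructor
  · rw [hdeg, hkap, hNTset, Set.ncard_coe_finset, hNTcard]
  · rw [hdeg, hEset, Set.ncard_coe_finset]
    omega
end
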